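/- arXiv:0710.0173 — 4 statements merged into one kernel-verified Lean document; each statement's English description precedes it below -/
import Mathlib

section
/- Suppose the Coxeter group W associated to the E-GCM graph (Γ,M) is finite, let J ⊆ I_n, and suppose every element of W^J is fully commutative. Then every J^c-dominant position is adjacency-free. -/
/-- An E-generalized Cartan matrix (E-GCM) on a finite index type `ι`. -/
structure EGCM (ι : Type*) [Fintype ι] where
  /-- the matrix of amplitudes -/
  M : ι → ι → ℝ
  diag : ∀ i, M i i = 2
  offDiag_nonpos : ∀ i j, i ≠ j → M i j ≤ 0
  zero_iff : ∀ i j, M i j = 0 ↔ M j i = 0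
  prod_cond : ∀ i j, i ≠ j → M i j * M j i ≠ 0 →
    4 ≤ M i j * M j i ∨
      ∃ k : ℕ, 3 ≤ k ∧ M i j * M j i = 4 * Real.cos (Real.pi / k) ^ 2

namespace EGCM

variable {ι : Type*} [Fintype ι]

/-- Adjacency in the E-GCM graph. -/
def Adj (E : EGCM ι) (i j : ι) : Prop := i ≠ j ∧ E.M i j ≠ 0

/-- The underlying simple graph of an E-GCM graph. -/
def graph (E : EGCM ι) : SimpleGraph ι where
  Adj i j := i ≠ j ∧ E.M i j ≠ 0
  symm := by
    constructor
    intro i j ⟨h1, h2⟩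
    exact ⟨h1.symm, fun hz => h2 ((E.zero_iff j i).mp hz)⟩
  loopless := by constructor; intro i ⟨h, _⟩; exact h rfl

/-- The result of firing node `i` from position `lam`. -/
def fire (E : EGCM ι) (lam : ι → ℝ) (i : ι) : ι → ℝ := fun j => lam j - E.M i j * lam i

/-- The position resulting from firing the nodes in the list `s` in order. -/
def fireList (E : EGCM ι) (lam : ι → ℝ) : List ι → (ι → ℝ)
  | [] => lam
  | i :: s => fireList E (E.fire lam i) s

/-- The firing sequence `s` is legal from position `lam`: at each step the
fired node carries a positive number. -/
def Legal (E : EGCM ι) (lam : ι → ℝ) : List ι → Prop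
  | [] => True
  | i :: s => 0 < lam i ∧ Legal E (E.fire lam i) s

/-- A position with no positive entries. -/
def Terminal (lam : ι → ℝ) : Prop := ∀ i, lam i ≤ 0

/-- `s` is a (convergent) game sequence from `lam`: a legal firing sequence whose
resulting position has no positive entries. -/
def IsGameSeq (E : EGCM ι) (lam : ι → ℝ) (s : List ι) : Prop :=
  E.Legal lam s ∧ Terminal (E.fireList lam s)

/-- The position after `k` steps of the infinite firing sequence `f`. -/
def posAt (E : EGCM ι) (lam : ι → ℝ) (f : ℕ → ι) : ℕ → (ι → ℝ)
  | 0 => lam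
  | k + 1 => E.fire (posAt E lam f k) (f k)

/-- `f` is a divergent game sequence from `lam`: an infinite sequence of legal firings. -/
def DivergentSeq (E : EGCM ι) (lam : ι → ℝ) (f : ℕ → ι) : Prop :=
  ∀ k, 0 < E.posAt lam f k (f k)

/-- A dominant position: all numbers nonnegative. -/
def Dominant (lam : ι → ℝ) : Prop := ∀ i, 0 ≤ lam i

/-- A strongly dominant position: all numbers positive. -/
def StronglyDominant (lam : ι → ℝ) : Prop := ∀ i, 0 < lam i

/-- The E-GCM graph is admissible if some nonzero dominant position has a
convergent game sequence. -/
def Admissible (E : EGCM ι) : Prop :=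
  ∃ lam : ι → ℝ, Dominant lam ∧ lam ≠ 0 ∧ ∃ s : List ι, E.IsGameSeq lam s

/-- The E-GCM graph is strongly admissible if every nonzero dominant position has a
convergent game sequence. -/
def StronglyAdmissible (E : EGCM ι) : Prop :=
  ∀ lam : ι → ℝ, Dominant lam → lam ≠ 0 → ∃ s : List ι, E.IsGameSeq lam s

/-- A position is adjacency-free if no position reachable from it by a legal firing
sequence (i.e. no intermediate position of a game sequence) has positive numbers at
two adjacent nodes. -/
def AdjacencyFree (E : EGCM ι) (lam : ι → ℝ) : Prop :=
  ∀ s : List ι, E.Legal lam s →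
    ¬ ∃ i j, E.Adj i j ∧ 0 < E.fireList lam s i ∧ 0 < E.fireList lam s j

/-- A `J`-complement-dominant position: zero exactly at the nodes of `J`, positive elsewhere. -/
def JcDominant (J : Set ι) (lam : ι → ℝ) : Prop :=
  (∀ j ∈ J, lam j = 0) ∧ ∀ i ∉ J, 0 < lam i

open Classical in
/-- The Coxeter exponent `m i j` attached to the E-GCM: `m i j = k` if
`M i j * M j i = 4 cos²(π/k)` with `k ≥ 2`, and `m i j = 0` (representing `∞`)
if `M i j * M j i ≥ 4`. -/
noncomputable def m (E : EGCM ι) (i j : ι) : ℕ :=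
  if i = j then 1
  else if h : ∃ k : ℕ, 2 ≤ k ∧ E.M i j * E.M j i = 4 * Real.cos (Real.pi / k) ^ 2
    then Nat.find h else 0

theorem m_symm (E : EGCM ι) (i j : ι) : E.m i j = E.m j i := by
  unfold m
  rcases eq_or_ne i j with rfl | hij
  · simp
  · rw [if_neg hij, if_neg (Ne.symm hij)]
    by_cases h : ∃ k : ℕ, 2 ≤ k ∧ E.M i j * E.M j i = 4 * Real.cos (Real.pi / k) ^ 2
    · have h' : ∃ k : ℕ, 2 ≤ k ∧ E.M j i * E.M i j = 4 * Real.cos (Real.pi / k) ^ 2 := by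
        rw [mul_comm]; exact h
      rw [dif_pos h, dif_pos h']
      exact le_antisymm (Nat.find_mono fun n hn => by rwa [mul_comm (E.M i j)])
        (Nat.find_mono fun n hn => by rwa [mul_comm (E.M j i)])
    · have h' : ¬ ∃ k : ℕ, 2 ≤ k ∧ E.M j i * E.M i j = 4 * Real.cos (Real.pi / k) ^ 2 := by
        rw [mul_comm]; exact h
      rw [dif_neg h, dif_neg h']

theorem m_offDiag (E : EGCM ι) (i j : ι) (h : i ≠ j) : E.m i j ≠ 1 := by
  classical
  unfold m
  rw [if_neg h]
  split
  · rename_i hex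
    have := Nat.find_spec hex
    omega
  · omega

/-- The Coxeter matrix associated to the E-GCM. -/
noncomputable def cox (E : EGCM ι) : CoxeterMatrix ι where
  M := fun i j => E.m i j
  isSymm := by
    ext i j
    exact E.m_symm j i
  diagonal := by intro i; simp [m]
  off_diagonal := fun i j h => E.m_offDiag i j h

/-- The reflection `S i` of the geometric representation:
`S i v = v − 2 B(α i, v) • α i` where `B (α i, α j) = M i j / 2`. -/
noncomputable def S [DecidableEq ι] (E : EGCM ι) (i : ι) : Module.End ℝ (ι → ℝ) :=
  LinearMap.id -
    LinearMap.smulRight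
      ((∑ k, E.M i k • LinearMap.proj k : (ι → ℝ) →ₗ[ℝ] ℝ)) (Pi.single i 1)

end EGCM

section Roots

variable {ι : Type*} [Fintype ι] [DecidableEq ι]
variable {W : Type*} [Group W]

/-- `α` is a root for the geometric representation `σ`. -/
def IsRoot (σ : W →* Module.End ℝ (ι → ℝ)) (α : ι → ℝ) : Prop :=
  ∃ (w : W) (i : ι), σ w (Pi.single i 1) = α

/-- `α` is a positive root. -/
def IsPosRoot (σ : W →* Module.End ℝ (ι → ℝ)) (α : ι → ℝ) : Prop :=
  IsRoot σ α ∧ ∀ i, 0 ≤ α i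

/-- `α` is a negative root. -/
def IsNegRoot (σ : W →* Module.End ℝ (ι → ℝ)) (α : ι → ℝ) : Prop :=
  IsRoot σ α ∧ ∀ i, α i ≤ 0

/-- `N_M(w)`: the set of positive roots sent to negative roots by `w`. -/
def NM (σ : W →* Module.End ℝ (ι → ℝ)) (w : W) : Set (ι → ℝ) :=
  {α | IsPosRoot σ α ∧ IsNegRoot σ (σ w α)}

/-- `𝔖_M(α)`: the positive roots which are real multiples of `α`. -/
def Sfrak (σ : W →* Module.End ℝ (ι → ℝ)) (α : ι → ℝ) : Set (ι → ℝ) :=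
  {β | (∃ K : ℝ, β = K • α) ∧ IsPosRoot σ β}

end Roots

section Parabolic

variable {ι : Type*} {W : Type*} [Group W]

/-- The standard parabolic subgroup `W_J`. -/
def parabolic {M : CoxeterMatrix ι} (cs : CoxeterSystem M W) (J : Set ι) : Subgroup W :=
  Subgroup.closure (cs.simple '' J)

/-- The set `W^J` of minimal coset representatives. -/
def minReps {M : CoxeterMatrix ι} (cs : CoxeterSystem M W) (J : Set ι) : Set W :=
  {w | ∀ j ∈ J, cs.length w < cs.length (w * cs.simple j)}

end Parabolic

namespace EGCM

variable {ι : Type*} [Fintype ι]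

/-- The E-GCM subgraph induced on a subset `I` of the nodes. -/
def restrict (E : EGCM ι) (I : Finset ι) : EGCM {x // x ∈ I} where
  M i j := E.M i j
  diag i := E.diag i
  offDiag_nonpos i j h := E.offDiag_nonpos i j (fun hc => h (Subtype.ext hc))
  zero_iff i j := E.zero_iff i j
  prod_cond i j h := E.prod_cond i j (fun hc => h (Subtype.ext hc))

/-- Adjacent nodes `i`, `j` are odd-neighborly if `m i j` is odd. -/
def OddNeighborly (E : EGCM ι) (i j : ι) : Prop := E.Adj i j ∧ Odd (E.m i j)

/-- The factor `K_{j i} = −(M j i) / (2 cos (π / m i j))` attached to an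
odd-neighborly pair `(i, j)`. -/
noncomputable def Kfac (E : EGCM ι) (i j : ι) : ℝ :=
  -E.M j i / (2 * Real.cos (Real.pi / (E.m i j : ℝ)))

/-- `Π_P` for the ON-path `P` given by a list of nodes: the product of the factors
`K` along consecutive pairs. -/
noncomputable def piON (E : EGCM ι) : List ι → ℝ
  | [] => 1
  | [_] => 1
  | a :: b :: t => piON E (b :: t) * E.Kfac a b

/-- `y` can be reached from `x` by a path of odd neighbors. -/
def ONReach (E : EGCM ι) (x y : ι) : Prop :=
  ∃ l : List ι, l.Chain' E.OddNeighborly ∧ l.head? = some x ∧ l.getLast? = some y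

/-- The ON-connected component containing `x` is unital ON-cyclic: every ON-cycle
whose nodes lie in this component has `Π = 1`. -/
def UnitalONCyclicAt (E : EGCM ι) (x : ι) : Prop :=
  ∀ l : List ι, l ≠ [] → l.Chain' E.OddNeighborly → (∀ y ∈ l, E.ONReach x y) →
    l.head? = l.getLast? → E.piON l = 1

/-- The E-GCM graph has an odd asymmetry: an odd-neighborly pair `i`, `j` with
`M i j ≠ M j i`. -/
def HasOddAsymmetry (E : EGCM ι) : Prop :=
  ∃ i j, E.OddNeighborly i j ∧ E.M i j ≠ E.M j i

end EGCM

section FullComm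

variable {ι : Type*} [Fintype ι] {W : Type*} [Group W]

/-- An elementary simplification of commuting type: interchange adjacent letters
`x`, `y` with `m x y = 2`. -/
def CommMove (E : EGCM ι) (l l' : List ι) : Prop :=
  ∃ (u v : List ι) (x y : ι), E.m x y = 2 ∧ l = u ++ x :: y :: v ∧ l' = u ++ y :: x :: v

/-- `w` is fully commutative: any reduced word for `w` can be obtained from any other
by a sequence of elementary simplifications of commuting type. -/
def FullyCommutative (E : EGCM ι) {W : Type*} [Group W] (cs : CoxeterSystem E.cox W)
    (w : W) : Prop :=
  ∀ l l' : List ι,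
    cs.IsReduced l.reverse → cs.wordProd l.reverse = w →
    cs.IsReduced l'.reverse → cs.wordProd l'.reverse = w →
    Relation.ReflTransGen (CommMove E) l l'

end FullComm

/-- The Coxeter graph of a Coxeter matrix: an edge between `i ≠ j` iff `m i j ≠ 2`. -/
def coxGraph {ι : Type*} (cm : CoxeterMatrix ι) : SimpleGraph ι where
  Adj i j := i ≠ j ∧ cm i j ≠ 2
  symm := by
    constructor
    intro i j ⟨h1, h2⟩
    exact ⟨h1.symm, by rwa [cm.symmetric j i]⟩
  loopless := by constructor; intro i ⟨h, _⟩; exact h rfl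

/-- The E-GCM `E` has associated exponents given by the Coxeter matrix `cm`:
`M i j * M j i = 4 cos² (π / cm i j)` when `cm i j ≠ 0` and `M i j * M j i ≥ 4`
when `cm i j = 0` (representing `∞`), with `M i j = 0` iff `cm i j = 2`. -/
def Compat {ι : Type*} [Fintype ι] (E : EGCM ι) (cm : CoxeterMatrix ι) : Prop :=
  ∀ i j : ι, i ≠ j →
    (E.M i j = 0 ↔ cm i j = 2) ∧
    ((cm i j = 0 ∧ 4 ≤ E.M i j * E.M j i) ∨
      (cm i j ≠ 0 ∧ E.M i j * E.M j i = 4 * Real.cos (Real.pi / (cm i j : ℝ)) ^ 2))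

namespace EGCMAux

open CoxeterSystem Real List

variable {ι : Type*} [Fintype ι] [DecidableEq ι]

theorem sum_mul_single (E : EGCM ι) (i j : ι) :
    ∑ k, E.M i k * (Pi.single j 1 : ι → ℝ) k = E.M i j := by
  rw [Finset.sum_eq_single j]
  · simp
  · intro b _ hb
    simp [Pi.single_apply, hb]
  · intro h; exact absurd (Finset.mem_univ j) h

theorem S_apply (E : EGCM ι) (i : ι) (v : ι → ℝ) :
    E.S i v = v - (∑ k, E.M i k * v k) • (Pi.single i 1 : ι → ℝ) := by
  simp only [EGCM.S, LinearMap.sub_apply, LinearMap.id_apply, LinearMap.smulRight_apply,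
    LinearMap.coe_sum, Finset.sum_apply, LinearMap.smul_apply, LinearMap.proj_apply,
    smul_eq_mul]

theorem S_single (E : EGCM ι) (i k : ι) :
    E.S i (Pi.single k 1) = Pi.single k 1 - E.M i k • (Pi.single i 1 : ι → ℝ) := by
  rw [S_apply, sum_mul_single]

theorem S_single_self (E : EGCM ι) (i : ι) :
    E.S i (Pi.single i 1) = -(Pi.single i 1 : ι → ℝ) := by
  rw [S_single, E.diag]
  module

theorem S_mul_self (E : EGCM ι) (i : ι) : E.S i * E.S i = 1 := by
  apply LinearMap.ext; intro v
  rw [Module.End.mul_apply, S_apply E i v, map_sub, map_smul, S_apply E i v, S_single_self]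
  simp only [Module.End.one_apply]
  module

end EGCMAux
namespace EGCMAux

open CoxeterSystem Real List

variable {ι : Type*} [Fintype ι] [DecidableEq ι]

theorem m_spec (E : EGCM ι) {i j : ι} (hij : i ≠ j) (h : E.m i j ≠ 0) :
    2 ≤ E.m i j ∧ E.M i j * E.M j i = 4 * Real.cos (Real.pi / (E.m i j : ℝ)) ^ 2 := by
  classical
  have hd : E.m i j = (if h : ∃ k : ℕ, 2 ≤ k ∧ E.M i j * E.M j i = 4 * Real.cos (Real.pi / k) ^ 2
      then Nat.find h else 0) := by
    unfold EGCM.m; rw [if_neg hij]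
  by_cases hex : ∃ k : ℕ, 2 ≤ k ∧ E.M i j * E.M j i = 4 * Real.cos (Real.pi / k) ^ 2
  · have hspec := Nat.find_spec hex
    rw [hd, dif_pos hex]
    exact hspec
  · exfalso; apply h; rw [hd, dif_neg hex]

theorem m_eq_two_of_M_eq_zero (E : EGCM ι) {i j : ι} (hij : i ≠ j) (hM : E.M i j = 0) :
    E.m i j = 2 := by
  classical
  have hprod : E.M i j * E.M j i = 4 * Real.cos (Real.pi / (2 : ℕ)) ^ 2 := by
    rw [hM]
    norm_num [Real.cos_pi_div_two]
  have hex : ∃ k : ℕ, 2 ≤ k ∧ E.M i j * E.M j i = 4 * Real.cos (Real.pi / k) ^ 2 :=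
    ⟨2, le_refl 2, hprod⟩
  unfold EGCM.m
  rw [if_neg hij, dif_pos hex]
  have h1 := Nat.find_spec hex
  have h2 : Nat.find hex ≤ 2 := Nat.find_le ⟨le_refl 2, hprod⟩
  omega

theorem m_zero_prod (E : EGCM ι) {i j : ι} (hij : i ≠ j) (h0 : E.m i j = 0) :
    E.M i j ≠ 0 ∧ 4 ≤ E.M i j * E.M j i := by
  classical
  have hM : E.M i j ≠ 0 := by
    intro hM
    rw [m_eq_two_of_M_eq_zero E hij hM] at h0
    omega
  refine ⟨hM, ?_⟩
  have hMji : E.M j i ≠ 0 := fun hz => hM ((E.zero_iff i j).mpr hz)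
  have hprod : E.M i j * E.M j i ≠ 0 := mul_ne_zero hM hMji
  rcases E.prod_cond i j hij hprod with h4 | ⟨k, hk3, hk⟩
  · exact h4
  · exfalso
    have hex : ∃ k : ℕ, 2 ≤ k ∧ E.M i j * E.M j i = 4 * Real.cos (Real.pi / k) ^ 2 :=
      ⟨k, by omega, hk⟩
    unfold EGCM.m at h0
    rw [if_neg hij, dif_pos hex] at h0
    have := Nat.find_spec hex
    omega

theorem m_adj_cases (E : EGCM ι) {i j : ι} (hij : i ≠ j) (hM : E.M i j ≠ 0) :
    E.m i j = 0 ∨ 3 ≤ E.m i j := by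
  by_cases h0 : E.m i j = 0
  · exact Or.inl h0
  · right
    obtain ⟨h2, hc⟩ := m_spec E hij h0
    rcases Nat.lt_or_ge (E.m i j) 3 with h3 | h3
    · exfalso
      have hm2 : E.m i j = 2 := by omega
      rw [hm2] at hc
      have hMji : E.M j i ≠ 0 := fun hz => hM ((E.zero_iff i j).mpr hz)
      have : E.M i j * E.M j i = 0 := by
        rw [hc]
        norm_num [Real.cos_pi_div_two]
      exact mul_ne_zero hM hMji this
    · exact h3

theorem sin_two_helper (A B : ℝ) :
    Real.sin (A + B) + Real.sin (A - B) = 2 * Real.sin A * Real.cos B := by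
  rw [Real.sin_add, Real.sin_sub]; ring

/-- basic positivity facts for `θ = π / m`, `m ≥ 3`. -/
theorem theta_facts {m : ℕ} (hm : 3 ≤ m) :
    0 < Real.pi / m ∧ Real.pi / m < Real.pi / 2 ∧ 0 < Real.sin (Real.pi / m) ∧
      0 < Real.cos (Real.pi / m) ∧ 0 < Real.sin (2 * (Real.pi / m)) := by
  have hmpos : (0:ℝ) < m := by positivity
  have hpi := Real.pi_pos
  have h1 : 0 < Real.pi / m := by positivity
  have hm3 : (3:ℝ) ≤ m := by exact_mod_cast hm
  have h2 : Real.pi / m < Real.pi / 2 := by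
    apply div_lt_div_of_pos_left hpi (by norm_num)
    linarith
  have h3 : 0 < Real.sin (Real.pi / m) :=
    Real.sin_pos_of_pos_of_lt_pi h1 (h2.trans (by linarith))
  have h4 : 0 < Real.cos (Real.pi / m) :=
    Real.cos_pos_of_mem_Ioo ⟨by linarith, h2⟩
  have h5 : 0 < Real.sin (2 * (Real.pi / m)) := by
    apply Real.sin_pos_of_pos_of_lt_pi (by linarith)
    calc 2 * (Real.pi / m) < 2 * (Real.pi / 2) := by
          apply mul_lt_mul_of_pos_left h2 (by norm_num)
      _ = Real.pi := by ring
  exact ⟨h1, h2, h3, h4, h5⟩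

theorem sin_nonneg_of_le {m k : ℕ} (hm : 3 ≤ m) (hk : k ≤ m) :
    0 ≤ Real.sin (k * (Real.pi / m)) := by
  have hmpos : (0:ℝ) < m := by positivity
  apply Real.sin_nonneg_of_nonneg_of_le_pi
  · positivity
  · rw [div_eq_mul_inv]
    calc (k:ℝ) * (Real.pi * (m:ℝ)⁻¹) = (k:ℝ)/(m:ℝ) * Real.pi := by ring
      _ ≤ 1 * Real.pi := by
          apply mul_le_mul_of_nonneg_right _ Real.pi_pos.le
          rw [div_le_one hmpos]
          exact_mod_cast hk
      _ = Real.pi := one_mul _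

theorem sin_pos_of_lt {m k : ℕ} (hm : 3 ≤ m) (hk0 : 1 ≤ k) (hk : k < m) :
    0 < Real.sin (k * (Real.pi / m)) := by
  have hmpos : (0:ℝ) < m := by positivity
  apply Real.sin_pos_of_pos_of_lt_pi
  · have := (theta_facts hm).1
    have hk0' : (1:ℝ) ≤ k := by exact_mod_cast hk0
    nlinarith
  · rw [div_eq_mul_inv]
    calc (k:ℝ) * (Real.pi * (m:ℝ)⁻¹) = (k:ℝ)/(m:ℝ) * Real.pi := by ring
      _ < 1 * Real.pi := by
          apply mul_lt_mul_of_pos_right _ Real.pi_pos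
          rw [div_lt_one hmpos]
          exact_mod_cast hk
      _ = Real.pi := one_mul _

end EGCMAux
namespace EGCMAux

open CoxeterSystem Real List

variable {ι : Type*} [Fintype ι] [DecidableEq ι]

set_option linter.unusedSectionVars false

/-- the 2×2 recursion matrix as a map on pairs. -/
def rmul (c mij mji : ℝ) (z : ℝ × ℝ) : ℝ × ℝ :=
  ((c - 1) * z.1 + mij * z.2, -(mji * z.1) - z.2)

theorem rmul_addp (c mij mji : ℝ) (z w : ℝ × ℝ) :
    rmul c mij mji (z + w) = rmul c mij mji z + rmul c mij mji w := by
  simp only [rmul, Prod.mk_add_mk, Prod.fst_add, Prod.snd_add, Prod.mk.injEq]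
  constructor <;> ring

theorem rmul_subp (c mij mji : ℝ) (z w : ℝ × ℝ) :
    rmul c mij mji (z - w) = rmul c mij mji z - rmul c mij mji w := by
  simp only [rmul, Prod.mk_sub_mk, Prod.fst_sub, Prod.snd_sub, Prod.mk.injEq]
  constructor <;> ring

theorem rmul_sq (c mij mji : ℝ) (hc : mij * mji = c) (z : ℝ × ℝ) :
    rmul c mij mji (rmul c mij mji z) = (c - 2) • rmul c mij mji z - z := by
  rw [Prod.ext_iff]
  simp only [rmul, Prod.smul_fst, Prod.smul_snd, Prod.fst_sub, Prod.snd_sub, smul_eq_mul]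
  subst hc
  constructor <;> ring

/-- Chebyshev: the 2×2 recursion has order dividing `m` in the finite case. -/
theorem rmul_iterate_eq_id_fin {m : ℕ} (hm : 3 ≤ m) (c mij mji : ℝ) (hprod : mij * mji = c)
    (hc : c = 4 * Real.cos (Real.pi / m) ^ 2) (z : ℝ × ℝ) :
    (rmul c mij mji)^[m] z = z := by
  obtain ⟨h1, h2, h3, h4, h5⟩ := theta_facts hm
  set θ := Real.pi / m with hθ
  have hsin2 : Real.sin (2 * θ) ≠ 0 := ne_of_gt h5
  have hc2 : c - 2 = 2 * Real.cos (2 * θ) := by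
    rw [Real.cos_two_mul]; rw [hc]; ring
  have key : ∀ n : ℕ, ∀ z : ℝ × ℝ, (rmul c mij mji)^[n + 1] z =
      (Real.sin ((2 * (n : ℝ) + 2) * θ) / Real.sin (2 * θ)) • rmul c mij mji z -
      (Real.sin ((2 * (n : ℝ)) * θ) / Real.sin (2 * θ)) • z := by
    intro n
    induction n with
    | zero =>
      intro z
      simp only [Nat.cast_zero, Function.iterate_one]
      rw [show (2 * (0:ℝ) + 2) * θ = 2 * θ by ring, show (2 * (0:ℝ)) * θ = 0 by ring]
      rw [Real.sin_zero, div_self hsin2]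
      simp
    | succ n ih =>
      intro z
      have trig : Real.sin ((2 * ((n:ℝ) + 1) + 2) * θ) =
          (c - 2) * Real.sin ((2 * (n:ℝ) + 2) * θ) - Real.sin ((2 * (n:ℝ)) * θ) := by
        have h := sin_two_helper ((2 * (n:ℝ) + 2) * θ) (2 * θ)
        rw [hc2]
        rw [show (2 * (n:ℝ) + 2) * θ + 2 * θ = (2 * ((n:ℝ) + 1) + 2) * θ by ring,
          show (2 * (n:ℝ) + 2) * θ - 2 * θ = (2 * (n:ℝ)) * θ by ring] at h
        linarith
      rw [Function.iterate_succ_apply, ih (rmul c mij mji z), rmul_sq c mij mji hprod z]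
      have hA : Real.sin ((2 * ((n:ℝ) + 1) + 2) * θ) / Real.sin (2 * θ) =
          (c - 2) * (Real.sin ((2 * (n:ℝ) + 2) * θ) / Real.sin (2 * θ)) -
            Real.sin ((2 * (n:ℝ)) * θ) / Real.sin (2 * θ) := by
        rw [trig]; ring
      have hB : (2 * ((n:ℝ) + 1)) * θ = (2 * (n:ℝ) + 2) * θ := by ring
      push_cast
      rw [hB, hA]
      module
  obtain ⟨m', rfl⟩ : ∃ m', m = m' + 1 := ⟨m - 1, by omega⟩
  rw [key m' z]
  have e1 : (2 * (m':ℝ) + 2) * θ = 2 * Real.pi := by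
    have hm0 : ((m' : ℝ) + 1) ≠ 0 := by positivity
    rw [hθ]
    push_cast
    field_simp
  have e2 : (2 * (m':ℝ)) * θ = 2 * Real.pi - 2 * θ := by
    rw [← e1]; ring
  rw [e1, e2, Real.sin_two_pi]
  rw [show (2:ℝ) * Real.pi - 2 * θ = -(2 * θ - 2 * Real.pi) by ring, Real.sin_neg,
    Real.sin_sub, Real.sin_two_pi, Real.cos_two_pi]
  rw [zero_div]
  have : -(Real.sin (2 * θ) * 1 - Real.cos (2 * θ) * 0) / Real.sin (2 * θ) = -1 := by
    field_simp
    ring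
  rw [this]
  simp

theorem rmul_iterate_eq_id_two (mij mji : ℝ) (h1 : mij = 0) (h2 : mji = 0) (z : ℝ × ℝ) :
    (rmul (mij * mji) mij mji)^[2] z = z := by
  subst h1; subst h2
  show rmul _ _ _ (rmul _ _ _ z) = z
  simp [rmul]

/-- the inhomogeneous recursion. -/
def XSeq (c mij mji : ℝ) (d : ℝ × ℝ) : ℕ → ℝ × ℝ
  | 0 => (0, 0)
  | n + 1 => rmul c mij mji (XSeq c mij mji d n) + d

theorem XSeq_eq_zero {m : ℕ} (c mij mji : ℝ) (hprod : mij * mji = c) (d : ℝ × ℝ)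
    (hiter : ∀ z : ℝ × ℝ, (rmul c mij mji)^[m] z = z) (hdet : c ≠ 4) :
    XSeq c mij mji d m = 0 := by
  have rmul_zero : rmul c mij mji 0 = 0 := by simp [rmul]
  have key : ∀ n : ℕ, rmul c mij mji (XSeq c mij mji d n) - XSeq c mij mji d n =
      (rmul c mij mji)^[n] d - d := by
    intro n
    induction n with
    | zero => show rmul c mij mji 0 - 0 = _; simp [rmul_zero]
    | succ n ih =>
      have h1 : (rmul c mij mji)^[n] d = rmul c mij mji (XSeq c mij mji d n)
          - XSeq c mij mji d n + d := by rw [ih]; abel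
      have hX : XSeq c mij mji d (n + 1) = rmul c mij mji (XSeq c mij mji d n) + d := rfl
      rw [Function.iterate_succ_apply', h1, hX]
      rw [rmul_addp c mij mji (rmul c mij mji (XSeq c mij mji d n)) d,
        rmul_addp c mij mji (rmul c mij mji (XSeq c mij mji d n) - XSeq c mij mji d n) d,
        rmul_subp]
      abel
  have h0 := key m
  rw [hiter d] at h0
  simp only [sub_self] at h0
  have h0' : rmul c mij mji (XSeq c mij mji d m) = XSeq c mij mji d m := by
    have := sub_eq_zero.mp h0
    exact this
  set z := XSeq c mij mji d m with hz
  have e1 : (c - 1) * z.1 + mij * z.2 = z.1 := congrArg Prod.fst h0'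
  have e2 : -(mji * z.1) - z.2 = z.2 := congrArg Prod.snd h0'
  have hz1 : (c - 4) * z.1 = 0 := by linear_combination 2 * e1 + mij * e2 + z.1 * hprod
  have hz1' : z.1 = 0 := by
    rcases mul_eq_zero.mp hz1 with h | h
    · exact absurd (by linarith : c = 4) hdet
    · exact h
  have hz2 : z.2 = 0 := by
    rw [hz1'] at e2
    simp at e2
    linarith
  rw [Prod.ext_iff]
  exact ⟨hz1', hz2⟩

end EGCMAux
namespace EGCMAux

open CoxeterSystem Real List

variable {ι : Type*} [Fintype ι] [DecidableEq ι]

set_option linter.unusedSectionVars false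

noncomputable def fval (E : EGCM ι) (i : ι) (v : ι → ℝ) : ℝ := ∑ k, E.M i k * v k

theorem fval_single (E : EGCM ι) (i k : ι) : fval E i (Pi.single k 1) = E.M i k :=
  sum_mul_single E i k

theorem S_apply' (E : EGCM ι) (i : ι) (v : ι → ℝ) :
    E.S i v = v - fval E i v • (Pi.single i 1 : ι → ℝ) := S_apply E i v

theorem T_apply (E : EGCM ι) (i j : ι) (v : ι → ℝ) :
    (E.S i * E.S j) v = v - (fval E i v - E.M i j * fval E j v) • (Pi.single i 1 : ι → ℝ)
      - fval E j v • (Pi.single j 1 : ι → ℝ) := by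
  rw [Module.End.mul_apply, S_apply' E j v, map_sub, map_smul, S_apply' E i v, S_single E i j]
  module

theorem T_single_i (E : EGCM ι) (i j : ι) :
    (E.S i * E.S j) (Pi.single i 1) =
      (E.M i j * E.M j i - 1) • (Pi.single i 1 : ι → ℝ) - E.M j i • (Pi.single j 1 : ι → ℝ) := by
  rw [Module.End.mul_apply, S_single E j i, map_sub, map_smul, S_single_self, S_single E i j]
  module

theorem T_single_j (E : EGCM ι) (i j : ι) :
    (E.S i * E.S j) (Pi.single j 1) =
      E.M i j • (Pi.single i 1 : ι → ℝ) - (Pi.single j 1 : ι → ℝ) := by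
  rw [Module.End.mul_apply, S_single_self, map_neg, S_single E i j]
  module

theorem T_pow (E : EGCM ι) (i j : ι) (v : ι → ℝ) (n : ℕ) :
    ((E.S i * E.S j) ^ n) v = v
      - (XSeq (E.M i j * E.M j i) (E.M i j) (E.M j i)
          (fval E i v - E.M i j * fval E j v, fval E j v) n).1 • (Pi.single i 1 : ι → ℝ)
      - (XSeq (E.M i j * E.M j i) (E.M i j) (E.M j i)
          (fval E i v - E.M i j * fval E j v, fval E j v) n).2 • (Pi.single j 1 : ι → ℝ) := by
  set c := E.M i j * E.M j i
  set d : ℝ × ℝ := (fval E i v - E.M i j * fval E j v, fval E j v) with hd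
  induction n with
  | zero =>
    simp [XSeq]
  | succ n ih =>
    rw [pow_succ', Module.End.mul_apply, ih, map_sub, map_sub, map_smul, map_smul,
      T_apply E i j v, T_single_i E i j, T_single_j E i j]
    have hX1 : (XSeq c (E.M i j) (E.M j i) d (n + 1)).1 =
        (c - 1) * (XSeq c (E.M i j) (E.M j i) d n).1
          + E.M i j * (XSeq c (E.M i j) (E.M j i) d n).2 + d.1 := rfl
    have hX2 : (XSeq c (E.M i j) (E.M j i) d (n + 1)).2 =
        -(E.M j i * (XSeq c (E.M i j) (E.M j i) d n).1)
          - (XSeq c (E.M i j) (E.M j i) d n).2 + d.2 := rfl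
    rw [hX1, hX2]
    have hd1 : d.1 = fval E i v - E.M i j * fval E j v := rfl
    have hd2 : d.2 = fval E j v := rfl
    rw [hd1, hd2]
    module

theorem S_liftable (E : EGCM ι) : CoxeterMatrix.IsLiftable E.cox (fun i => E.S i) := by
  intro i j
  show (E.S i * E.S j) ^ (E.cox i j) = 1
  by_cases hij : i = j
  · subst hij
    rw [E.cox.diagonal i, pow_one]
    exact S_mul_self E i
  · have hcox : E.cox i j = E.m i j := rfl
    by_cases h0 : E.m i j = 0
    · rw [hcox, h0, pow_zero]
    · obtain ⟨h2, hc⟩ := m_spec E hij h0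
      have hsinpos : 0 < Real.sin (Real.pi / (E.m i j : ℝ)) := by
        apply Real.sin_pos_of_pos_of_lt_pi
        · have : (0:ℝ) < (E.m i j : ℝ) := by exact_mod_cast Nat.pos_of_ne_zero h0
          positivity
        · have hm1 : (1:ℝ) < (E.m i j : ℝ) := by exact_mod_cast by omega
          calc Real.pi / (E.m i j : ℝ) < Real.pi / 1 := by
                apply div_lt_div_of_pos_left Real.pi_pos (by norm_num) hm1
            _ = Real.pi := by norm_num
      have hcne4 : E.M i j * E.M j i ≠ 4 := by
        rw [hc]
        have hs := Real.sin_sq_add_cos_sq (Real.pi / (E.m i j : ℝ))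
        nlinarith [hsinpos]
      have hiter : ∀ z : ℝ × ℝ,
          (rmul (E.M i j * E.M j i) (E.M i j) (E.M j i))^[E.m i j] z = z := by
        rcases eq_or_lt_of_le h2 with heq | h3
        · have hM0 : E.M i j = 0 := by
            have hc0 : E.M i j * E.M j i = 0 := by
              rw [hc, ← heq]
              norm_num [Real.cos_pi_div_two]
            rcases mul_eq_zero.mp hc0 with h | h
            · exact h
            · exact (E.zero_iff i j).mpr h
          have hM0' : E.M j i = 0 := (E.zero_iff i j).mp hM0
          intro z
          rw [← heq]
          exact rmul_iterate_eq_id_two _ _ hM0 hM0' z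
        · intro z
          exact rmul_iterate_eq_id_fin h3 _ _ _ rfl hc z
      apply LinearMap.ext; intro v
      rw [hcox, T_pow E i j v (E.m i j),
        XSeq_eq_zero _ _ _ rfl _ hiter hcne4]
      simp

/-- The geometric representation of `W` on `ι → ℝ`. -/
noncomputable def tau (E : EGCM ι) {W : Type*} [Group W] (cs : CoxeterSystem E.cox W) :
    W →* Module.End ℝ (ι → ℝ) :=
  cs.lift ⟨fun i => E.S i, S_liftable E⟩

theorem tau_simple (E : EGCM ι) {W : Type*} [Group W] (cs : CoxeterSystem E.cox W) (i : ι) :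
    tau E cs (cs.simple i) = E.S i :=
  cs.lift_apply_simple (S_liftable E) i

end EGCMAux
namespace EGCMAux

open CoxeterSystem Real List

variable {ι : Type*} [Fintype ι] [DecidableEq ι]

set_option linter.unusedSectionVars false
set_option maxHeartbeats 1600000

/-- coefficients of `τ(π(alternatingWord i j r)) e_i` in terms of `e_i, e_j`,
with `p = -M i j`, `q = -M j i`. -/
noncomputable def abSeq (p q : ℝ) : ℕ → ℝ × ℝ
  | 0 => (1, 0)
  | r + 1 =>
    if Even r then ((abSeq p q r).1, q * (abSeq p q r).1 - (abSeq p q r).2)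
    else (-(abSeq p q r).1 + p * (abSeq p q r).2, (abSeq p q r).2)

theorem abSeq_succ_even (p q : ℝ) (t : ℕ) :
    abSeq p q (2 * t + 1) =
      ((abSeq p q (2 * t)).1, q * (abSeq p q (2 * t)).1 - (abSeq p q (2 * t)).2) := by
  have he : Even (2 * t) := ⟨t, by ring⟩
  rw [abSeq, if_pos he]

theorem abSeq_succ_odd (p q : ℝ) (t : ℕ) :
    abSeq p q (2 * t + 2) =
      (-(abSeq p q (2 * t + 1)).1 + p * (abSeq p q (2 * t + 1)).2,
        (abSeq p q (2 * t + 1)).2) := by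
  have ho : ¬ Even (2 * t + 1) := by
    simp [Nat.even_add_one, Nat.even_mul]
  rw [show 2 * t + 2 = (2 * t + 1) + 1 from rfl, abSeq, if_neg ho]

theorem tau_alt (E : EGCM ι) {W : Type*} [Group W] (cs : CoxeterSystem E.cox W)
    (i j : ι) (r : ℕ) :
    tau E cs (cs.wordProd (alternatingWord i j r)) (Pi.single i 1) =
      (abSeq (-E.M i j) (-E.M j i) r).1 • (Pi.single i 1 : ι → ℝ)
        + (abSeq (-E.M i j) (-E.M j i) r).2 • (Pi.single j 1 : ι → ℝ) := by
  induction r with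
  | zero =>
    simp only [alternatingWord, wordProd_nil, map_one, Module.End.one_apply, abSeq]
    module
  | succ r ih =>
    rw [alternatingWord_succ', wordProd_cons, map_mul, Module.End.mul_apply, ih]
    by_cases hr : Even r
    · rw [if_pos hr, tau_simple, map_add, map_smul, map_smul, S_single E j i, S_single_self]
      rw [abSeq, if_pos hr]
      module
    · rw [if_neg hr, tau_simple, map_add, map_smul, map_smul, S_single E i j, S_single_self]
      rw [abSeq, if_neg hr]
      module

/-- closed form for `abSeq` in the finite bond case. -/
theorem abSeq_closed {m : ℕ} (hm : 3 ≤ m) (p q : ℝ)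
    (hpq : p * q = 4 * Real.cos (Real.pi / m) ^ 2) (t : ℕ) :
    abSeq p q (2 * t) =
      (Real.sin ((2 * (t:ℝ) + 1) * (Real.pi / m)) / Real.sin (Real.pi / m),
        q * (Real.sin ((2 * (t:ℝ)) * (Real.pi / m)) / Real.sin (2 * (Real.pi / m)))) ∧
    abSeq p q (2 * t + 1) =
      (Real.sin ((2 * (t:ℝ) + 1) * (Real.pi / m)) / Real.sin (Real.pi / m),
        q * (Real.sin ((2 * (t:ℝ) + 2) * (Real.pi / m)) / Real.sin (2 * (Real.pi / m)))) := by
  obtain ⟨h1, h2, h3, h4, h5⟩ := theta_facts hm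
  set θ := Real.pi / m with hθ
  have hs : Real.sin θ ≠ 0 := ne_of_gt h3
  have hco : Real.cos θ ≠ 0 := ne_of_gt h4
  have hs2 : Real.sin (2 * θ) ≠ 0 := ne_of_gt h5
  have hsin2 : Real.sin (2 * θ) = 2 * Real.sin θ * Real.cos θ := Real.sin_two_mul θ
  induction t with
  | zero =>
    constructor
    · show abSeq p q 0 = _
      rw [abSeq]
      simp only [Nat.cast_zero]
      rw [show (2 * (0:ℝ) + 1) * θ = θ by ring, show (2 * (0:ℝ)) * θ = 0 by ring,
        Real.sin_zero, div_self hs]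
      norm_num
    · rw [show 2 * 0 + 1 = 2 * 0 + 1 from rfl, abSeq_succ_even, abSeq]
      simp only [Nat.cast_zero]
      rw [show (2 * (0:ℝ) + 1) * θ = θ by ring, show (2 * (0:ℝ) + 2) * θ = 2 * θ by ring,
        div_self hs, div_self hs2]
      norm_num
  | succ t iht =>
    obtain ⟨ihe, iho⟩ := iht
    have hid1 : Real.sin ((2 * (t:ℝ) + 3) * θ) + Real.sin ((2 * (t:ℝ) + 1) * θ) =
        2 * Real.sin ((2 * (t:ℝ) + 2) * θ) * Real.cos θ := by
      have h := sin_two_helper ((2 * (t:ℝ) + 2) * θ) θ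
      rw [show (2 * (t:ℝ) + 2) * θ + θ = (2 * (t:ℝ) + 3) * θ by ring,
        show (2 * (t:ℝ) + 2) * θ - θ = (2 * (t:ℝ) + 1) * θ by ring] at h
      linarith
    have hid2 : Real.sin ((2 * (t:ℝ) + 4) * θ) + Real.sin ((2 * (t:ℝ) + 2) * θ) =
        2 * Real.sin ((2 * (t:ℝ) + 3) * θ) * Real.cos θ := by
      have h := sin_two_helper ((2 * (t:ℝ) + 3) * θ) θ
      rw [show (2 * (t:ℝ) + 3) * θ + θ = (2 * (t:ℝ) + 4) * θ by ring,
        show (2 * (t:ℝ) + 3) * θ - θ = (2 * (t:ℝ) + 2) * θ by ring] at h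
      linarith
    have key1 : abSeq p q (2 * (t + 1)) =
        (Real.sin ((2 * (t:ℝ) + 3) * θ) / Real.sin θ,
          q * (Real.sin ((2 * (t:ℝ) + 2) * θ) / Real.sin (2 * θ))) := by
      rw [show 2 * (t + 1) = 2 * t + 2 by ring, abSeq_succ_odd, iho]
      rw [Prod.ext_iff]
      refine ⟨?_, rfl⟩
      show -(Real.sin ((2 * (t:ℝ) + 1) * θ) / Real.sin θ) +
          p * (q * (Real.sin ((2 * (t:ℝ) + 2) * θ) / Real.sin (2 * θ))) = _
      calc -(Real.sin ((2 * (t:ℝ) + 1) * θ) / Real.sin θ) +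
            p * (q * (Real.sin ((2 * (t:ℝ) + 2) * θ) / Real.sin (2 * θ)))
          = -(Real.sin ((2 * (t:ℝ) + 1) * θ) / Real.sin θ) +
            (4 * Real.cos θ ^ 2) *
              (Real.sin ((2 * (t:ℝ) + 2) * θ) / (2 * Real.sin θ * Real.cos θ)) := by
            rw [← hsin2, ← hpq]; ring
        _ = (-Real.sin ((2 * (t:ℝ) + 1) * θ) + 2 * Real.sin ((2 * (t:ℝ) + 2) * θ) * Real.cos θ)
              / Real.sin θ := by
            field_simp
            ring
        _ = Real.sin ((2 * (t:ℝ) + 3) * θ) / Real.sin θ := by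
            rw [show -Real.sin ((2 * (t:ℝ) + 1) * θ)
              + 2 * Real.sin ((2 * (t:ℝ) + 2) * θ) * Real.cos θ
              = Real.sin ((2 * (t:ℝ) + 3) * θ) by linarith]
    have key2 : abSeq p q (2 * (t + 1) + 1) =
        (Real.sin ((2 * (t:ℝ) + 3) * θ) / Real.sin θ,
          q * (Real.sin ((2 * (t:ℝ) + 4) * θ) / Real.sin (2 * θ))) := by
      rw [abSeq_succ_even, key1]
      rw [Prod.ext_iff]
      refine ⟨rfl, ?_⟩
      show q * (Real.sin ((2 * (t:ℝ) + 3) * θ) / Real.sin θ)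
          - q * (Real.sin ((2 * (t:ℝ) + 2) * θ) / Real.sin (2 * θ)) = _
      have hu : Real.sin ((2 * (t:ℝ) + 3) * θ) / Real.sin θ =
          (Real.sin ((2 * (t:ℝ) + 4) * θ) + Real.sin ((2 * (t:ℝ) + 2) * θ))
            / Real.sin (2 * θ) := by
        rw [hsin2]
        have hid2s : Real.sin θ * (Real.sin ((2*(t:ℝ)+4)*θ) + Real.sin ((2*(t:ℝ)+2)*θ)) =
            Real.sin θ * (2 * Real.sin ((2*(t:ℝ)+3)*θ) * Real.cos θ) := by rw [hid2]
        rw [div_eq_div_iff hs (mul_ne_zero (mul_ne_zero two_ne_zero hs) hco)]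
        linear_combination -hid2s
      rw [hu]
      have hid2s : Real.sin θ * (Real.sin ((2*(t:ℝ)+4)*θ) + Real.sin ((2*(t:ℝ)+2)*θ)) =
          Real.sin θ * (2 * Real.sin ((2*(t:ℝ)+3)*θ) * Real.cos θ) := by rw [hid2]
      field_simp
      linarith [hid2s]
    constructor
    · rw [key1]
      push_cast
      rw [show 2 * ((t:ℝ) + 1) + 1 = 2 * (t:ℝ) + 3 by ring,
        show 2 * ((t:ℝ) + 1) = 2 * (t:ℝ) + 2 by ring]
    · rw [key2]
      push_cast
      rw [show 2 * ((t:ℝ) + 1) + 1 = 2 * (t:ℝ) + 3 by ring,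
        show 2 * ((t:ℝ) + 1) + 2 = 2 * (t:ℝ) + 4 by ring]

theorem abSeq_nonneg_fin {m : ℕ} (hm : 3 ≤ m) (p q : ℝ) (hq : 0 ≤ q)
    (hpq : p * q = 4 * Real.cos (Real.pi / m) ^ 2) {r : ℕ} (hr : r + 1 ≤ m) :
    0 ≤ (abSeq p q r).1 ∧ 0 ≤ (abSeq p q r).2 := by
  obtain ⟨h1, h2, h3, h4, h5⟩ := theta_facts hm
  rcases Nat.even_or_odd r with he | ho
  · obtain ⟨t, ht⟩ := he
    have ht' : r = 2 * t := by omega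
    subst ht'
    rw [(abSeq_closed hm p q hpq t).1]
    constructor
    · apply div_nonneg _ h3.le
      have : ((2 * t + 1 : ℕ) : ℝ) = 2 * (t:ℝ) + 1 := by push_cast; ring
      rw [← this]
      exact sin_nonneg_of_le hm (by omega)
    · apply mul_nonneg hq
      apply div_nonneg _ h5.le
      have : ((2 * t : ℕ) : ℝ) = 2 * (t:ℝ) := by push_cast; ring
      rw [← this]
      exact sin_nonneg_of_le hm (by omega)
  · obtain ⟨t, ht⟩ := ho
    subst ht
    rw [(abSeq_closed hm p q hpq t).2]
    constructor
    · apply div_nonneg _ h3.le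
      have : ((2 * t + 1 : ℕ) : ℝ) = 2 * (t:ℝ) + 1 := by push_cast; ring
      rw [← this]
      exact sin_nonneg_of_le hm (by omega)
    · apply mul_nonneg hq
      apply div_nonneg _ h5.le
      have : ((2 * t + 2 : ℕ) : ℝ) = 2 * (t:ℝ) + 2 := by push_cast; ring
      rw [← this]
      exact sin_nonneg_of_le hm (by omega)

theorem abSeq_inf_aux (p q : ℝ) (hp : 0 < p) (hq : 0 < q) (h4 : 4 ≤ p * q) :
    ∀ t : ℕ, 1 ≤ (abSeq p q (2 * t)).1 ∧ 0 ≤ (abSeq p q (2 * t)).2 ∧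
      p * (abSeq p q (2 * t)).2 ≤ (p * q - 2) * (abSeq p q (2 * t)).1 := by
    intro t
    induction t with
    | zero =>
      rw [show 2 * 0 = 0 from rfl, abSeq]
      refine ⟨le_refl 1, le_refl 0, ?_⟩
      dsimp only
      nlinarith
    | succ t ih =>
      obtain ⟨hx1, hy0, hyle⟩ := ih
      set x := (abSeq p q (2 * t)).1
      set y := (abSeq p q (2 * t)).2
      have hodd : abSeq p q (2 * t + 1) = (x, q * x - y) := abSeq_succ_even p q t
      have heven : abSeq p q (2 * (t + 1)) = (-x + p * (q * x - y), q * x - y) := by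
        rw [show 2 * (t + 1) = 2 * t + 2 by ring, abSeq_succ_odd, hodd]
      rw [heven]
      dsimp only
      have hx0 : (0:ℝ) ≤ x := by linarith
      have h2x : 2 * x ≤ p * (q * x - y) := by nlinarith
      have hqxy : 0 ≤ q * x - y := by
        by_contra hneg
        push_neg at hneg
        have := mul_neg_of_pos_of_neg hp hneg
        linarith
      have hpq3 : (0:ℝ) ≤ p * q - 3 := by nlinarith
      refine ⟨by nlinarith, hqxy, ?_⟩
      nlinarith [mul_le_mul_of_nonneg_left hyle hpq3]

theorem abSeq_nonneg_inf (p q : ℝ) (hp : 0 < p) (hq : 0 < q) (h4 : 4 ≤ p * q) (r : ℕ) :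
    0 ≤ (abSeq p q r).1 ∧ 0 ≤ (abSeq p q r).2 := by
  have aux := abSeq_inf_aux p q hp hq h4
  rcases Nat.even_or_odd r with he | ho
  · obtain ⟨t, ht⟩ := he
    have ht' : r = 2 * t := by omega
    subst ht'
    obtain ⟨hx1, hy0, _⟩ := aux t
    exact ⟨by linarith, hy0⟩
  · obtain ⟨t, ht⟩ := ho
    subst ht
    obtain ⟨hx1, hy0, hyle⟩ := aux t
    rw [abSeq_succ_even]
    dsimp only
    constructor
    · linarith
    · by_contra hneg
      push_neg at hneg
      have h2x : 2 * (abSeq p q (2 * t)).1 ≤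
          p * (q * (abSeq p q (2 * t)).1 - (abSeq p q (2 * t)).2) := by nlinarith
      have := mul_neg_of_pos_of_neg hp hneg
      linarith

end EGCMAux
namespace EGCMAux

open CoxeterSystem Real List

variable {ι : Type*} [Fintype ι] [DecidableEq ι]

set_option linter.unusedSectionVars false
set_option maxHeartbeats 1600000

theorem single_nonneg_coord (i k : ι) : 0 ≤ (Pi.single i 1 : ι → ℝ) k := by
  rw [Pi.single_apply]
  split <;> norm_num

/-- **Key positivity theorem** (Björner–Brenti 4.2.2 style): if `ℓ(w sᵢ) > ℓ(w)` then
`τ(w) eᵢ` is a nonnegative vector. -/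
theorem tau_nonneg (E : EGCM ι) {W : Type*} [Group W] (cs : CoxeterSystem E.cox W)
    (w : W) (i : ι) (h : cs.length w < cs.length (w * cs.simple i)) (k : ι) :
    0 ≤ tau E cs w (Pi.single i 1) k := by
  classical
  suffices H : ∀ n : ℕ, ∀ w : W, cs.length w = n → ∀ i : ι,
      cs.length w < cs.length (w * cs.simple i) → ∀ k, 0 ≤ tau E cs w (Pi.single i 1) k by
    exact H (cs.length w) w rfl i h k
  intro n
  induction n using Nat.strong_induction_on with
  | _ n IH =>
  intro w hw i hasc k
  rcases Nat.eq_zero_or_pos n with hn0 | hn1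
  · have hw1 : w = 1 := cs.length_eq_zero_iff.mp (by omega)
    rw [hw1, map_one, Module.End.one_apply]
    exact single_nonneg_coord i k
  · have hwne : w ≠ 1 := by
      intro h1
      rw [h1, cs.length_one] at hw
      omega
    obtain ⟨j, hdesc⟩ := cs.exists_rightDescent_of_ne_one hwne
    have hdesc' : cs.length (w * cs.simple j) < cs.length w := hdesc
    have hij : i ≠ j := by
      rintro rfl
      omega
    set z : ℕ → W := fun r => w * (cs.wordProd (alternatingWord i j r))⁻¹ with hzdef
    have hz0 : z 0 = w := by
      simp [hzdef, alternatingWord]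
    have hzsucc : ∀ r : ℕ, z (r + 1) = z r * cs.simple (if Even r then j else i) := by
      intro r
      simp only [hzdef]
      rw [alternatingWord_succ', wordProd_cons, mul_inv_rev, cs.inv_simple, ← mul_assoc]
    have hzw : ∀ r : ℕ, z r * cs.wordProd (alternatingWord i j r) = w := by
      intro r
      simp [hzdef, mul_assoc]
    -- the chain predicate
    have hfail : ∃ r : ℕ, ¬ (cs.length (z r) + r = n) := ⟨n + 1, by omega⟩
    set k₀ := Nat.find hfail with hk₀
    have hk₀spec : ¬ (cs.length (z k₀) + k₀ = n) := Nat.find_spec hfail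
    have hk₀min : ∀ r < k₀, cs.length (z r) + r = n := by
      intro r hr
      by_contra hc
      have h1 : Nat.find hfail ≤ r := Nat.find_le hc
      rw [← hk₀] at h1
      omega
    have hD0 : cs.length (z 0) + 0 = n := by rw [hz0]; omega
    have hD1 : cs.length (z 1) + 1 = n := by
      have hz1 : z 1 = w * cs.simple j := by
        have := hzsucc 0
        rw [hz0] at this
        simpa using this
      rw [hz1]
      rcases cs.length_mul_simple w j with hh | hh
      · omega
      · omega
    have hk₀2 : 2 ≤ k₀ := by
      rcases Nat.lt_or_ge k₀ 2 with hlt | hge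
      · interval_cases k₀ <;> simp_all
      · exact hge
    set r := k₀ - 1 with hrdef
    have hr1 : 1 ≤ r := by omega
    have hDr : cs.length (z r) + r = n := hk₀min r (by omega)
    have hDr1 : cs.length (z (r - 1)) + (r - 1) = n := hk₀min (r - 1) (by omega)
    have hfailr : ¬ (cs.length (z (r + 1)) + (r + 1) = n) := by
      have : r + 1 = k₀ := by omega
      rw [this]
      exact hk₀spec
    -- ascent at the next letter
    have hascL : cs.length (z r) < cs.length (z r * cs.simple (if Even r then j else i)) := by
      rw [← hzsucc r]
      rcases cs.length_mul_simple (z r) (if Even r then j else i) with hh | hh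
      · rw [← hzsucc r] at hh
        omega
      · rw [← hzsucc r] at hh
        exfalso
        exact hfailr (by omega)
    -- ascent at the previous letter
    have hprev : z r * cs.simple (if Even (r - 1) then j else i) = z (r - 1) := by
      have h1 := hzsucc (r - 1)
      have h2 : r - 1 + 1 = r := by omega
      rw [h2] at h1
      rw [h1, cs.simple_mul_simple_cancel_right]
    have hascP : cs.length (z r) < cs.length (z r * cs.simple (if Even (r - 1) then j else i)) := by
      rw [hprev]
      omega
    have hasci : cs.length (z r) < cs.length (z r * cs.simple i) := by
      rcases Nat.even_or_odd r with he | ho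
      · have h1 : ¬ Even (r - 1) := by
          rw [Nat.even_sub hr1]
          simp [he]
        rw [if_neg h1] at hascP
        exact hascP
      · have h1 : ¬ Even r := Nat.not_even_iff_odd.mpr ho
        rw [if_neg h1] at hascL
        exact hascL
    have hascj : cs.length (z r) < cs.length (z r * cs.simple j) := by
      rcases Nat.even_or_odd r with he | ho
      · rw [if_pos he] at hascL
        exact hascL
      · have h1 : Even (r - 1) := by
          rcases ho with ⟨t, ht⟩
          have : r - 1 = 2 * t := by omega
          exact this ▸ ⟨t, by ring⟩
        rw [if_pos h1] at hascP
        exact hascP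
    -- apply the induction hypothesis at z r
    have hlenzr : cs.length (z r) = n - r := by omega
    have hlt : n - r < n := by omega
    have IHi : ∀ k', 0 ≤ tau E cs (z r) (Pi.single i 1) k' :=
      fun k' => IH (n - r) hlt (z r) hlenzr i hasci k'
    have IHj : ∀ k', 0 ≤ tau E cs (z r) (Pi.single j 1) k' :=
      fun k' => IH (n - r) hlt (z r) hlenzr j hascj k'
    -- bound on r in the finite bond case
    have hcox : E.cox i j = E.m i j := rfl
    have hrbound : E.m i j ≠ 0 → r + 1 ≤ E.m i j := by
      intro hm0
      obtain ⟨hm2, _⟩ := m_spec E hij hm0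
      by_contra hgt
      push_neg at hgt
      -- then D (E.m i j) holds, contradiction with hasc
      have hDm : cs.length (z (E.m i j)) + E.m i j = n := hk₀min (E.m i j) (by omega)
      have e1 : cs.wordProd (alternatingWord i j (E.m i j)) =
          cs.wordProd (alternatingWord j i (E.m i j)) := by
        have hle : E.m i j ≤ E.cox i j * 2 := by rw [hcox]; omega
        have := cs.prod_alternatingWord_eq_prod_alternatingWord_sub i j (E.m i j) hle
        rw [this, hcox]
        congr 1
        congr 1
        omega
      have e2 : alternatingWord j i (E.m i j) =
          (alternatingWord i j (E.m i j - 1)).concat i := by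
        conv_lhs => rw [show E.m i j = (E.m i j - 1) + 1 by omega]
        rw [alternatingWord_succ]
      have e3 : w * cs.simple i = z (E.m i j) * cs.wordProd (alternatingWord i j (E.m i j - 1)) := by
        conv_lhs => rw [← hzw (E.m i j)]
        rw [mul_assoc, e1, e2, wordProd_concat, cs.simple_mul_simple_cancel_right]
      have e4 : cs.length (w * cs.simple i) ≤ cs.length (z (E.m i j)) + (E.m i j - 1) := by
        rw [e3]
        calc cs.length _ ≤ cs.length (z (E.m i j)) +
            cs.length (cs.wordProd (alternatingWord i j (E.m i j - 1))) := cs.length_mul_le _ _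
          _ ≤ cs.length (z (E.m i j)) + (alternatingWord i j (E.m i j - 1)).length := by
              have := cs.length_wordProd_le (alternatingWord i j (E.m i j - 1))
              omega
          _ = cs.length (z (E.m i j)) + (E.m i j - 1) := by
              rw [length_alternatingWord]
      omega
    -- nonnegativity of the coefficients
    set p := -E.M i j with hp
    set q := -E.M j i with hq
    have hq0 : 0 ≤ q := by
      rw [hq]
      have := E.offDiag_nonpos j i (Ne.symm hij)
      linarith
    have hab : 0 ≤ (abSeq p q r).1 ∧ 0 ≤ (abSeq p q r).2 := by
      by_cases hm0 : E.m i j = 0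
      · obtain ⟨hMne, h4⟩ := m_zero_prod E hij hm0
        have hMjine : E.M j i ≠ 0 := fun hzz => hMne ((E.zero_iff i j).mpr hzz)
        have hppos : 0 < p := by
          rw [hp]
          have := E.offDiag_nonpos i j hij
          rcases lt_or_eq_of_le this with hh | hh
          · linarith
          · exact absurd hh hMne
        have hqpos : 0 < q := by
          rw [hq]
          have := E.offDiag_nonpos j i (Ne.symm hij)
          rcases lt_or_eq_of_le this with hh | hh
          · linarith
          · exact absurd hh hMjine
        have hpq4 : 4 ≤ p * q := by
          rw [hp, hq]
          calc (4:ℝ) ≤ E.M i j * E.M j i := h4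
            _ = -E.M i j * -E.M j i := by ring
        exact abSeq_nonneg_inf p q hppos hqpos hpq4 r
      · have hrb := hrbound hm0
        rcases Nat.lt_or_ge r 2 with hr2 | hr2
        · have hre1 : r = 1 := by omega
          rw [hre1]
          have h1 : abSeq p q 1 = (1, q) := by
            have := abSeq_succ_even p q 0
            simpa [abSeq] using this
          rw [h1]
          exact ⟨by norm_num, hq0⟩
        · have hm3 : 3 ≤ E.m i j := by omega
          obtain ⟨_, hcval⟩ := m_spec E hij hm0
          have hpq : p * q = 4 * Real.cos (Real.pi / (E.m i j : ℝ)) ^ 2 := by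
            rw [hp, hq, show -E.M i j * -E.M j i = E.M i j * E.M j i by ring, hcval]
          exact abSeq_nonneg_fin hm3 p q hq0 hpq hrb
    -- conclude
    have hw' : w = z r * cs.wordProd (alternatingWord i j r) := (hzw r).symm
    rw [hw', map_mul, Module.End.mul_apply, tau_alt E cs i j r, map_add, map_smul, map_smul]
    rw [← hp, ← hq]
    simp only [Pi.add_apply, Pi.smul_apply, smul_eq_mul]
    have := IHi k
    have := IHj k
    have h1 := hab.1
    have h2 := hab.2
    positivity

end EGCMAux
namespace EGCMAux

open CoxeterSystem Real List

variable {ι : Type*} [Fintype ι] [DecidableEq ι]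

set_option linter.unusedSectionVars false
set_option maxHeartbeats 1600000

theorem fireList_append (E : EGCM ι) (lam : ι → ℝ) (s t : List ι) :
    E.fireList lam (s ++ t) = E.fireList (E.fireList lam s) t := by
  induction s generalizing lam with
  | nil => rfl
  | cons a s ih =>
    show E.fireList (E.fire lam a) (s ++ t) = _
    rw [ih (E.fire lam a)]
    rfl

theorem legal_append (E : EGCM ι) (lam : ι → ℝ) (s t : List ι) :
    E.Legal lam (s ++ t) ↔ E.Legal lam s ∧ E.Legal (E.fireList lam s) t := by
  induction s generalizing lam with
  | nil =>
    show E.Legal lam t ↔ True ∧ E.Legal lam t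
    tauto
  | cons a s ih =>
    show (0 < lam a ∧ E.Legal (E.fire lam a) (s ++ t)) ↔
      (0 < lam a ∧ E.Legal (E.fire lam a) s) ∧ E.Legal (E.fireList (E.fire lam a) s) t
    rw [ih (E.fire lam a)]
    tauto

theorem sum_single_mul (t : ι) (lam : ι → ℝ) :
    ∑ l, (Pi.single t 1 : ι → ℝ) l * lam l = lam t := by
  rw [Finset.sum_eq_single t]
  · simp
  · intro b _ hb
    simp [Pi.single_apply, hb]
  · intro h; exact absurd (Finset.mem_univ t) h

theorem S_sum_pair (E : EGCM ι) (t : ι) (β lam : ι → ℝ) :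
    ∑ l, (E.S t β) l * lam l = (∑ l, β l * lam l) - fval E t β * lam t := by
  rw [S_apply']
  simp only [Pi.sub_apply, Pi.smul_apply, smul_eq_mul, sub_mul]
  rw [Finset.sum_sub_distrib]
  congr 1
  calc ∑ l, fval E t β * (Pi.single t 1 : ι → ℝ) l * lam l
      = fval E t β * ∑ l, (Pi.single t 1 : ι → ℝ) l * lam l := by
        rw [Finset.mul_sum]
        exact Finset.sum_congr rfl fun l _ => by ring
    _ = fval E t β * lam t := by rw [sum_single_mul]

theorem fire_adjoint (E : EGCM ι) (t : ι) (β lam : ι → ℝ) :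
    ∑ l, (E.S t β) l * lam l = ∑ l, β l * (E.fire lam t) l := by
  rw [S_sum_pair]
  simp only [EGCM.fire, mul_sub]
  rw [Finset.sum_sub_distrib]
  congr 1
  calc fval E t β * lam t = (∑ l, E.M t l * β l) * lam t := by rw [fval]
    _ = ∑ l, E.M t l * β l * lam t := by rw [Finset.sum_mul]
    _ = ∑ l, β l * (E.M t l * lam t) := Finset.sum_congr rfl fun l _ => by ring

theorem fireList_pair (E : EGCM ι) {W : Type*} [Group W] (cs : CoxeterSystem E.cox W)
    (s : List ι) (lam : ι → ℝ) (k : ι) :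
    E.fireList lam s k = ∑ l, (tau E cs (cs.wordProd s) (Pi.single k 1)) l * lam l := by
  induction s generalizing lam with
  | nil =>
    rw [wordProd_nil, map_one]
    show lam k = _
    simp only [Module.End.one_apply]
    rw [sum_single_mul]
  | cons t s ih =>
    show E.fireList (E.fire lam t) s k = _
    rw [ih (E.fire lam t), wordProd_cons, map_mul, Module.End.mul_apply, tau_simple]
    exact (fire_adjoint E t (tau E cs (cs.wordProd s) (Pi.single k 1)) lam).symm

/-- From a `Jᶜ`-dominant position, every legal firing sequence is (reversed) a reduced word
whose product lies in `W^J`. -/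
theorem legal_reduced (E : EGCM ι) {W : Type*} [Group W] (cs : CoxeterSystem E.cox W)
    (J : Set ι) (lam : ι → ℝ) (hJ : EGCM.JcDominant J lam) (s : List ι)
    (hs : E.Legal lam s) :
    cs.IsReduced s.reverse ∧ cs.wordProd s.reverse ∈ minReps cs J := by
  have hlam0 : ∀ l, 0 ≤ lam l := fun l => by
    by_cases hl : l ∈ J
    · rw [hJ.1 l hl]
    · exact (hJ.2 l hl).le
  induction s using List.reverseRecOn with
  | nil =>
    constructor
    · show cs.length (cs.wordProd []) = ([] : List ι).length
      simp
    · intro j hj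
      rw [reverse_nil, wordProd_nil, one_mul, cs.length_one, cs.length_simple]
      norm_num
  | append_singleton s i ih =>
    rw [legal_append] at hs
    obtain ⟨hsL, hstep⟩ := hs
    have hpos : 0 < E.fireList lam s i := hstep.1
    obtain ⟨hred, hmin⟩ := ih hsL
    set w := cs.wordProd s.reverse with hw
    have hlw : cs.length w = s.length := by
      have := hred
      rw [CoxeterSystem.IsReduced] at this
      rw [hw, this, List.length_reverse]
    have hπs : cs.wordProd s = w⁻¹ := by
      rw [hw, ← cs.wordProd_reverse, List.reverse_reverse]
    have hposP : 0 < ∑ l, (tau E cs w⁻¹ (Pi.single i 1)) l * lam l := by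
      rw [← hπs, ← fireList_pair]
      exact hpos
    have hasc : cs.length w < cs.length (cs.simple i * w) := by
      rcases cs.length_simple_mul w i with hh | hh
      · omega
      · exfalso
        set u := w⁻¹ * cs.simple i with hu
        have hui : u * cs.simple i = w⁻¹ := by
          rw [hu, cs.simple_mul_simple_cancel_right]
        have hlu : cs.length u = cs.length (cs.simple i * w) := by
          rw [hu, show w⁻¹ * cs.simple i = (cs.simple i * w)⁻¹ by
            rw [mul_inv_rev, cs.inv_simple], cs.length_inv]
        have hascu : cs.length u < cs.length (u * cs.simple i) := by
          rw [hui, cs.length_inv]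
          omega
        have hnn := tau_nonneg E cs u i hascu
        have hwi : tau E cs w⁻¹ (Pi.single i 1) = - tau E cs u (Pi.single i 1) := by
          rw [← hui, map_mul, Module.End.mul_apply, tau_simple, S_single_self, map_neg]
        have hsum : ∑ l, (tau E cs w⁻¹ (Pi.single i 1)) l * lam l ≤ 0 := by
          rw [hwi]
          apply Finset.sum_nonpos
          intro l _
          simp only [Pi.neg_apply, neg_mul]
          have h1 := hnn l
          have h2 := hlam0 l
          nlinarith
        linarith
    have hrev : (s ++ [i]).reverse = i :: s.reverse := by simp
    have hprod : cs.wordProd ((s ++ [i]).reverse) = cs.simple i * w := by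
      rw [hrev, wordProd_cons, hw]
    have hlen : cs.length (cs.simple i * w) = s.length + 1 := by
      rcases cs.length_simple_mul w i with hh | hh
      · omega
      · omega
    constructor
    · show cs.length (cs.wordProd ((s ++ [i]).reverse)) = ((s ++ [i]).reverse).length
      rw [hprod, hlen, hrev]
      simp
    · intro j' hj'
      rw [hprod]
      rcases cs.length_mul_simple (cs.simple i * w) j' with hh | hh
      · omega
      · exfalso
        have hwj : cs.length (w * cs.simple j') = cs.length w + 1 := by
          have h1 := hmin j' hj'
          rcases cs.length_mul_simple w j' with hh2 | hh2
          · omega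
          · omega
        set u := (cs.simple i * w * cs.simple j')⁻¹ with hu
        have hu' : u = cs.simple j' * (w⁻¹ * cs.simple i) := by
          rw [hu, mul_inv_rev, mul_inv_rev, cs.inv_simple, cs.inv_simple]
        have hui : u * cs.simple i = cs.simple j' * w⁻¹ := by
          rw [hu', mul_assoc, cs.simple_mul_simple_cancel_right]
        have hlu : cs.length u = cs.length w := by
          rw [hu, cs.length_inv]
          omega
        have hlui : cs.length (u * cs.simple i) = cs.length w + 1 := by
          rw [hui, show cs.simple j' * w⁻¹ = (w * cs.simple j')⁻¹ by
            rw [mul_inv_rev, cs.inv_simple], cs.length_inv, hwj]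
        have hascu : cs.length u < cs.length (u * cs.simple i) := by omega
        have hnn := tau_nonneg E cs u i hascu
        have hneg : tau E cs (cs.simple j' * w⁻¹) (Pi.single i 1)
            = - tau E cs u (Pi.single i 1) := by
          rw [← hui, map_mul, Module.End.mul_apply, tau_simple, S_single_self, map_neg]
        have hSj : ∑ l, (tau E cs (cs.simple j' * w⁻¹) (Pi.single i 1)) l * lam l
            = ∑ l, (tau E cs w⁻¹ (Pi.single i 1)) l * lam l := by
          rw [map_mul, Module.End.mul_apply, tau_simple, S_sum_pair, hJ.1 j' hj']
          ring
        have hsum : ∑ l, (tau E cs (cs.simple j' * w⁻¹) (Pi.single i 1)) l * lam l ≤ 0 := by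
          rw [hneg]
          apply Finset.sum_nonpos
          intro l _
          simp only [Pi.neg_apply, neg_mul]
          have h1 := hnn l
          have h2 := hlam0 l
          nlinarith
        rw [hSj] at hsum
        linarith

end EGCMAux
namespace EGCMAux

open CoxeterSystem Real List

variable {ι : Type*} [Fintype ι] [DecidableEq ι]

set_option linter.unusedSectionVars false
set_option maxHeartbeats 1600000

theorem abSeq_mirror (p q : ℝ) (r : ℕ) :
    (abSeq q p r).1 = (abSeq p q r).1 ∧ q * (abSeq q p r).2 = p * (abSeq p q r).2 := by
  induction r with
  | zero =>
    rw [abSeq, abSeq]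
    norm_num
  | succ r ih =>
    obtain ⟨ih1, ih2⟩ := ih
    by_cases hr : Even r
    · rw [abSeq, if_pos hr, abSeq, if_pos hr]
      refine ⟨ih1, ?_⟩
      dsimp only
      rw [mul_sub, mul_sub, ih1, ih2]
      ring
    · rw [abSeq, if_neg hr, abSeq, if_neg hr]
      refine ⟨?_, ih2⟩
      dsimp only
      rw [ih1, ih2]

/-- position values along an alternating firing sequence. -/
noncomputable def sSeq (p q a b : ℝ) : ℕ → ℝ
  | 0 => -b
  | 1 => a
  | (k+2) => (if Even k then p else q) * sSeq p q a b (k+1) - sSeq p q a b k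

theorem sSeq_zero (p q a b : ℝ) : sSeq p q a b 0 = -b := rfl
theorem sSeq_one (p q a b : ℝ) : sSeq p q a b 1 = a := rfl
theorem sSeq_add_two (p q a b : ℝ) (k : ℕ) :
    sSeq p q a b (k + 2) = (if Even k then p else q) * sSeq p q a b (k + 1)
      - sSeq p q a b k := rfl

theorem sSeq_eq (p q a b : ℝ) (t : ℕ) :
    sSeq p q a b (2 * t + 1) = (abSeq p q (2 * t)).1 * a + (abSeq p q (2 * t)).2 * b ∧
    sSeq p q a b (2 * t + 2) =
      (abSeq q p (2 * t + 1)).2 * a + (abSeq q p (2 * t + 1)).1 * b := by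
  induction t with
  | zero =>
    constructor
    · rw [show 2 * 0 + 1 = 1 from rfl, sSeq_one, abSeq]
      norm_num
    · rw [show 2 * 0 + 2 = 0 + 2 from rfl, sSeq_add_two, sSeq_one, sSeq_zero]
      have h1 : abSeq q p (2 * 0 + 1) = ((1:ℝ), p * 1 - 0) := by
        rw [abSeq_succ_even q p 0, abSeq]
      rw [show (2:ℕ) * 0 + 1 = 0 + 1 from rfl] at h1
      rw [h1]
      simp only [if_pos Even.zero]
      ring
  | succ t ih =>
    obtain ⟨ih1, ih2⟩ := ih
    set α := (abSeq p q (2 * t)).1 with hα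
    set β := (abSeq p q (2 * t)).2 with hβ
    set γ := (abSeq q p (2 * t + 1)).1 with hγ
    set δ := (abSeq q p (2 * t + 1)).2 with hδ
    have hm1 : γ = (abSeq p q (2 * t + 1)).1 := (abSeq_mirror p q (2 * t + 1)).1
    have hm2 : q * δ = p * (abSeq p q (2 * t + 1)).2 := (abSeq_mirror p q (2 * t + 1)).2
    have hodd : abSeq p q (2 * t + 1) = (α, q * α - β) := abSeq_succ_even p q t
    rw [hodd] at hm1 hm2
    dsimp only at hm1 hm2
    have hrecA : sSeq p q a b (2 * t + 3) =
        q * sSeq p q a b (2 * t + 2) - sSeq p q a b (2 * t + 1) := by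
      have hne : ¬ Even (2 * t + 1) := by simp [Nat.even_add_one, Nat.even_mul]
      rw [show 2 * t + 3 = (2 * t + 1) + 2 from rfl, sSeq_add_two, if_neg hne]
    have hrecB : sSeq p q a b (2 * t + 4) =
        p * sSeq p q a b (2 * t + 3) - sSeq p q a b (2 * t + 2) := by
      have he : Even (2 * t + 2) := ⟨t + 1, by ring⟩
      rw [show 2 * t + 4 = (2 * t + 2) + 2 from rfl, sSeq_add_two, if_pos he]
    have heven : abSeq p q (2 * t + 2) = (-α + p * (q * α - β), q * α - β) := by
      rw [abSeq_succ_odd, hodd]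
    have hstep1 : sSeq p q a b (2 * (t + 1) + 1) =
        (abSeq p q (2 * (t + 1))).1 * a + (abSeq p q (2 * (t + 1))).2 * b := by
      rw [show 2 * (t + 1) + 1 = 2 * t + 3 by ring, show 2 * (t + 1) = 2 * t + 2 by ring]
      rw [hrecA, ih1, ih2, heven]
      dsimp only
      rw [show q * ((δ * a + γ * b)) - (α * a + β * b)
          = (q * δ - α) * a + (q * γ - β) * b by ring, hm2, hm1]
      ring
    refine ⟨hstep1, ?_⟩
    have hQodd : abSeq q p (2 * t + 2) = (-γ + q * δ, δ) := abSeq_succ_odd q p t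
    have hmir22 : (abSeq q p (2 * t + 2)).1 = (abSeq p q (2 * t + 2)).1 :=
      (abSeq_mirror p q (2 * t + 2)).1
    have hQnext : abSeq q p (2 * (t + 1) + 1) =
        ((abSeq q p (2 * (t + 1))).1,
          p * (abSeq q p (2 * (t + 1))).1 - (abSeq q p (2 * (t + 1))).2) :=
      abSeq_succ_even q p (t + 1)
    rw [show 2 * (t + 1) + 2 = 2 * t + 4 by ring, hrecB]
    have hstep1' : sSeq p q a b (2 * t + 3) =
        (abSeq p q (2 * t + 2)).1 * a + (abSeq p q (2 * t + 2)).2 * b := by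
      have h := hstep1
      rw [show 2 * (t + 1) + 1 = 2 * t + 3 by ring, show 2 * (t + 1) = 2 * t + 2 by ring] at h
      exact h
    rw [hstep1', ih2, hQnext, show 2 * (t + 1) = 2 * t + 2 by ring, hmir22, hQodd]
    dsimp only
    rw [heven]
    dsimp only
    rw [hm1]
    ring

theorem sSeq_pos_fin {m : ℕ} (hm : 3 ≤ m) (p q a b : ℝ) (hp : 0 < p) (hq : 0 < q)
    (hpq : p * q = 4 * Real.cos (Real.pi / m) ^ 2) (ha : 0 < a) (hb : 0 < b) :
    ∀ k, 1 ≤ k → k ≤ m → 0 < sSeq p q a b k := by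
  obtain ⟨h1, h2, h3, h4, h5⟩ := theta_facts hm
  intro k hk1 hkm
  rcases Nat.even_or_odd k with he | ho
  · -- k = 2t+2
    obtain ⟨t', ht'⟩ := he
    have hk2 : ∃ t, k = 2 * t + 2 := ⟨t' - 1, by omega⟩
    obtain ⟨t, rfl⟩ := hk2
    rw [(sSeq_eq p q a b t).2]
    have hqp : q * p = 4 * Real.cos (Real.pi / m) ^ 2 := by rw [mul_comm]; exact hpq
    have hcl := (abSeq_closed hm q p hqp t).2
    rw [hcl]
    dsimp only
    have hγpos : 0 < Real.sin ((2 * (t:ℝ) + 1) * (Real.pi / m)) / Real.sin (Real.pi / m) := by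
      apply div_pos _ h3
      have hcast : (2 * (t:ℝ) + 1) = ((2 * t + 1 : ℕ) : ℝ) := by push_cast; ring
      rw [hcast]
      exact sin_pos_of_lt hm (by omega) (by omega)
    have hδnn : 0 ≤ p * (Real.sin ((2 * (t:ℝ) + 2) * (Real.pi / m)) / Real.sin (2 * (Real.pi / m))) := by
      apply mul_nonneg hp.le
      apply div_nonneg _ h5.le
      have hcast : (2 * (t:ℝ) + 2) = ((2 * t + 2 : ℕ) : ℝ) := by push_cast; ring
      rw [hcast]
      exact sin_nonneg_of_le hm (by omega)
    nlinarith
  · -- k = 2t+1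
    obtain ⟨t, rfl⟩ := ho
    rw [(sSeq_eq p q a b t).1]
    have hcl := (abSeq_closed hm p q hpq t).1
    rw [hcl]
    dsimp only
    rcases Nat.lt_or_ge (2 * t + 1) m with hlt | hge
    · have hαpos : 0 < Real.sin ((2 * (t:ℝ) + 1) * (Real.pi / m)) / Real.sin (Real.pi / m) := by
        apply div_pos _ h3
        have hcast : (2 * (t:ℝ) + 1) = ((2 * t + 1 : ℕ) : ℝ) := by push_cast; ring
        rw [hcast]
        exact sin_pos_of_lt hm (by omega) hlt
      have hβnn : 0 ≤ q * (Real.sin ((2 * (t:ℝ)) * (Real.pi / m)) / Real.sin (2 * (Real.pi / m))) := by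
        apply mul_nonneg hq.le
        apply div_nonneg _ h5.le
        have hcast : (2 * (t:ℝ)) = ((2 * t : ℕ) : ℝ) := by push_cast; ring
        rw [hcast]
        exact sin_nonneg_of_le hm (by omega)
      nlinarith
    · -- 2t+1 = m
      have heq : 2 * t + 1 = m := by omega
      have hαnn : 0 ≤ Real.sin ((2 * (t:ℝ) + 1) * (Real.pi / m)) / Real.sin (Real.pi / m) := by
        apply div_nonneg _ h3.le
        have hcast : (2 * (t:ℝ) + 1) = ((2 * t + 1 : ℕ) : ℝ) := by push_cast; ring
        rw [hcast]
        exact sin_nonneg_of_le hm (by omega)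
      have hβpos : 0 < q * (Real.sin ((2 * (t:ℝ)) * (Real.pi / m)) / Real.sin (2 * (Real.pi / m))) := by
        apply mul_pos hq
        apply div_pos _ h5
        have hcast : (2 * (t:ℝ)) = ((2 * t : ℕ) : ℝ) := by push_cast; ring
        rw [hcast]
        exact sin_pos_of_lt hm (by omega) (by omega)
      nlinarith

theorem sSeq_pos_inf (p q a b : ℝ) (hp : 0 < p) (hq : 0 < q) (h4 : 4 ≤ p * q)
    (ha : 0 < a) (hb : 0 < b) :
    ∀ k, 1 ≤ k → 0 < sSeq p q a b k := by
  intro k hk1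
  rcases Nat.even_or_odd k with he | ho
  · obtain ⟨t', ht'⟩ := he
    have hk2 : ∃ t, k = 2 * t + 2 := ⟨t' - 1, by omega⟩
    obtain ⟨t, rfl⟩ := hk2
    rw [(sSeq_eq p q a b t).2]
    have h4' : 4 ≤ q * p := by rw [mul_comm]; exact h4
    obtain ⟨hγ1, hδ0, _⟩ := abSeq_inf_aux q p hq hp h4' t
    have hodd : abSeq q p (2 * t + 1) =
        ((abSeq q p (2 * t)).1, p * (abSeq q p (2 * t)).1 - (abSeq q p (2 * t)).2) :=
      abSeq_succ_even q p t
    rw [hodd]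
    dsimp only
    have hδ' := (abSeq_nonneg_inf q p hq hp h4' (2 * t + 1)).2
    rw [hodd] at hδ'
    dsimp only at hδ'
    nlinarith
  · obtain ⟨t, rfl⟩ := ho
    rw [(sSeq_eq p q a b t).1]
    obtain ⟨hα1, hβ0, _⟩ := abSeq_inf_aux p q hp hq h4 t
    nlinarith

/-- the alternating extension word starting at `x`. -/
def extWord (x y : ι) (k : ℕ) : List ι := (alternatingWord y x k).reverse

theorem extWord_zero (x y : ι) : extWord x y 0 = [] := rfl

theorem extWord_succ (x y : ι) (k : ℕ) :
    extWord x y (k + 1) = extWord x y k ++ [if Even k then x else y] := by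
  rw [extWord, extWord, alternatingWord_succ', reverse_cons]

theorem fire_self (E : EGCM ι) (ν : ι → ℝ) (t : ι) : E.fire ν t t = -ν t := by
  show ν t - E.M t t * ν t = -ν t
  rw [E.diag t]
  ring

theorem fire_other (E : EGCM ι) (ν : ι → ℝ) (t u : ι) :
    E.fire ν t u = ν u - E.M t u * ν t := rfl

theorem legal_single (E : EGCM ι) (ν : ι → ℝ) (c : ι) :
    E.Legal ν [c] ↔ 0 < ν c := by
  show (0 < ν c ∧ True) ↔ _
  tauto

theorem ext_track (E : EGCM ι) {x y : ι} (hxy : x ≠ y) (μ : ι → ℝ) (K : ℕ)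
    (hpos : ∀ k, 1 ≤ k → k ≤ K → 0 < sSeq (-E.M x y) (-E.M y x) (μ x) (μ y) k) :
    E.Legal μ (extWord x y K) ∧
    E.fireList μ (extWord x y K) x =
      (if Even K then sSeq (-E.M x y) (-E.M y x) (μ x) (μ y) (K + 1)
       else - sSeq (-E.M x y) (-E.M y x) (μ x) (μ y) K) ∧
    E.fireList μ (extWord x y K) y =
      (if Even K then - sSeq (-E.M x y) (-E.M y x) (μ x) (μ y) K
       else sSeq (-E.M x y) (-E.M y x) (μ x) (μ y) (K + 1)) := by
  set p := -E.M x y with hpdef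
  set q := -E.M y x with hqdef
  set a := μ x with hadef
  set b := μ y with hbdef
  induction K with
  | zero =>
    refine ⟨trivial, ?_, ?_⟩
    · rw [extWord_zero]
      show a = if Even 0 then sSeq p q a b 1 else - sSeq p q a b 0
      rw [if_pos Even.zero, sSeq_one]
    · rw [extWord_zero]
      show b = if Even 0 then - sSeq p q a b 0 else sSeq p q a b 1
      rw [if_pos Even.zero, sSeq_zero]
      ring
  | succ K ih =>
    obtain ⟨hL, hvx, hvy⟩ := ih (fun k h1 h2 => hpos k h1 (by omega))
    set ν := E.fireList μ (extWord x y K) with hν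
    have hposK1 : 0 < sSeq p q a b (K + 1) := hpos (K + 1) (by omega) (by omega)
    rw [extWord_succ, legal_append, fireList_append]
    by_cases he : Even K
    · rw [if_pos he]
      have hνx : ν x = sSeq p q a b (K + 1) := by rw [hvx, if_pos he]
      have hνy : ν y = - sSeq p q a b K := by rw [hvy, if_pos he]
      have hL1 : E.Legal ν [x] := (legal_single E ν x).mpr (by rw [hνx]; exact hposK1)
      refine ⟨⟨hL, hL1⟩, ?_, ?_⟩
      · show E.fireList ν [x] x = _
        have hodd : ¬ Even (K + 1) := by simp [Nat.even_add_one, he]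
        rw [if_neg hodd]
        show E.fire ν x x = _
        rw [fire_self, hνx]
      · show E.fireList ν [x] y = _
        have hodd : ¬ Even (K + 1) := by simp [Nat.even_add_one, he]
        rw [if_neg hodd]
        show E.fire ν x y = _
        rw [fire_other, hνx, hνy, show K + 1 + 1 = K + 2 from rfl, sSeq_add_two, if_pos he]
        rw [hpdef]
        ring
    · rw [if_neg he]
      have hνx : ν x = - sSeq p q a b K := by rw [hvx, if_neg he]
      have hνy : ν y = sSeq p q a b (K + 1) := by rw [hvy, if_neg he]
      have hL1 : E.Legal ν [y] := (legal_single E ν y).mpr (by rw [hνy]; exact hposK1)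
      refine ⟨⟨hL, hL1⟩, ?_, ?_⟩
      · show E.fireList ν [y] x = _
        have hev : Even (K + 1) := by simpa [Nat.even_add_one] using he
        rw [if_pos hev]
        show E.fire ν y x = _
        rw [fire_other, hνx, hνy, show K + 1 + 1 = K + 2 from rfl, sSeq_add_two, if_neg he]
        rw [hqdef]
        ring
      · show E.fireList ν [y] y = _
        have hev : Even (K + 1) := by simpa [Nat.even_add_one] using he
        rw [if_pos hev]
        show E.fire ν y y = _
        rw [fire_self, hνy]

end EGCMAux
namespace EGCMAux

open CoxeterSystem Real List

variable {ι : Type*} [Fintype ι] [DecidableEq ι]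

set_option linter.unusedSectionVars false
set_option maxHeartbeats 1600000

theorem m_diag (E : EGCM ι) (t : ι) : E.m t t = 1 := by
  unfold EGCM.m
  rw [if_pos rfl]

theorem alternatingWord_mem {x y t : ι} {k : ℕ} (ht : t ∈ alternatingWord x y k) :
    t = x ∨ t = y := by
  induction k with
  | zero => simp [alternatingWord] at ht
  | succ k ih =>
    rw [alternatingWord_succ'] at ht
    rcases List.mem_cons.mp ht with h | h
    · by_cases he : Even k
      · rw [if_pos he] at h
        exact Or.inr h
      · rw [if_neg he] at h
        exact Or.inl h
    · exact ih h

theorem extWord_length (x y : ι) (k : ℕ) : (extWord x y k).length = k := by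
  rw [extWord, List.length_reverse, length_alternatingWord]

theorem extWord_mem {x y t : ι} {k : ℕ} (ht : t ∈ extWord x y k) : t = x ∨ t = y := by
  rw [extWord, List.mem_reverse] at ht
  rcases alternatingWord_mem ht with h | h
  · exact Or.inr h
  · exact Or.inl h

theorem commMove_filter (E : EGCM ι) {x y : ι} (hxy : x ≠ y) (hMxy : E.M x y ≠ 0)
    {l l' : List ι} (h : CommMove E l l') :
    l.filter (fun t => decide (t = x ∨ t = y)) =
      l'.filter (fun t => decide (t = x ∨ t = y)) := by
  have hmxy2 : E.m x y ≠ 2 := by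
    rcases m_adj_cases E hxy hMxy with h0 | h3 <;> omega
  have hmyx2 : E.m y x ≠ 2 := by
    rw [← E.m_symm]
    exact hmxy2
  obtain ⟨u, v, c, d, hm2, hl, hl'⟩ := h
  subst hl
  subst hl'
  rw [List.filter_append, List.filter_append]
  congr 1
  show List.filter _ (c :: d :: v) = List.filter _ (d :: c :: v)
  by_cases hc : c = x ∨ c = y <;> by_cases hd : d = x ∨ d = y
  · exfalso
    rcases hc with rfl | rfl <;> rcases hd with rfl | rfl
    · rw [m_diag] at hm2; omega
    · exact hmxy2 hm2
    · exact hmyx2 hm2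
    · rw [m_diag] at hm2; omega
  · simp [hc, hd]
  · simp [hc, hd]
  · simp [hc, hd]

theorem reflTransGen_filter (E : EGCM ι) {x y : ι} (hxy : x ≠ y) (hMxy : E.M x y ≠ 0)
    {l l' : List ι} (h : Relation.ReflTransGen (CommMove E) l l') :
    l.filter (fun t => decide (t = x ∨ t = y)) =
      l'.filter (fun t => decide (t = x ∨ t = y)) := by
  induction h with
  | refl => rfl
  | tail _ hstep ih => rw [ih, commMove_filter E hxy hMxy hstep]

theorem extWord_head {x y : ι} {k : ℕ} (hk : 1 ≤ k) :
    extWord x y k = x :: (alternatingWord x y (k - 1)).reverse := by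
  rw [extWord, show k = (k - 1) + 1 by omega, alternatingWord_succ]
  rw [List.concat_eq_append, List.reverse_append]
  simp

end EGCMAux

open CoxeterSystem

/-- **Proposition 4.2 (2).** If `W` is finite and every element of `W^J` is fully
commutative, then every `Jᶜ`-dominant position is adjacency-free. -/
theorem egcm_fullyCommutative_implies_adjacencyFree {ι : Type*} [Fintype ι]
    (E : EGCM ι) {W : Type*} [Group W] [Finite W] (cs : CoxeterSystem E.cox W)
    (J : Set ι) (hfc : ∀ w ∈ minReps cs J, FullyCommutative E cs w) :
    ∀ lam : ι → ℝ, EGCM.JcDominant J lam → E.AdjacencyFree lam := by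
  letI : DecidableEq ι := Classical.decEq ι
  intro lam hJc s hlegal
  rintro ⟨x, y, ⟨hxy, hMxy⟩, hx, hy⟩
  set μ := E.fireList lam s with hμ
  have hMyx : E.M y x ≠ 0 := fun hz => hMxy ((E.zero_iff x y).mpr hz)
  have hp : 0 < -E.M x y := by
    rcases lt_or_eq_of_le (E.offDiag_nonpos x y hxy) with h | h
    · linarith
    · exact absurd h hMxy
  have hq : 0 < -E.M y x := by
    rcases lt_or_eq_of_le (E.offDiag_nonpos y x (Ne.symm hxy)) with h | h
    · linarith
    · exact absurd h hMyx
  rcases EGCMAux.m_adj_cases E hxy hMxy with hm0 | hm3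
  · -- infinite bond case : contradicts finiteness of W
    have h4 : 4 ≤ (-E.M x y) * (-E.M y x) := by
      have h := (EGCMAux.m_zero_prod E hxy hm0).2
      calc (4:ℝ) ≤ E.M x y * E.M y x := h
        _ = (-E.M x y) * (-E.M y x) := by ring
    have hposall : ∀ k, 1 ≤ k → 0 < EGCMAux.sSeq (-E.M x y) (-E.M y x) (μ x) (μ y) k :=
      EGCMAux.sSeq_pos_inf _ _ _ _ hp hq h4 hx hy
    have hlegalK : ∀ K, E.Legal lam (s ++ EGCMAux.extWord x y K) := fun K =>
      (EGCMAux.legal_append E lam s _).mpr ⟨hlegal,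
        (EGCMAux.ext_track E hxy μ K (fun k h1 _ => hposall k h1)).1⟩
    have hlen : ∀ K, cs.length (cs.wordProd ((s ++ EGCMAux.extWord x y K).reverse))
        = s.length + K := by
      intro K
      have hred := (EGCMAux.legal_reduced E cs J lam hJc _ (hlegalK K)).1
      rw [CoxeterSystem.IsReduced] at hred
      rw [hred, List.length_reverse, List.length_append, EGCMAux.extWord_length]
    have hinj : Function.Injective
        (fun K => cs.wordProd ((s ++ EGCMAux.extWord x y K).reverse)) := by
      intro K1 K2 h
      have h1 := hlen K1
      simp only at h
      rw [h, hlen K2] at h1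
      omega
    haveI := Finite.of_injective _ hinj
    exact not_finite ℕ
  · -- finite bond case
    have hm0' : E.m x y ≠ 0 := by omega
    obtain ⟨hm2, hcval⟩ := EGCMAux.m_spec E hxy hm0'
    set m' := E.m x y with hm'
    have hpq : (-E.M x y) * (-E.M y x) = 4 * Real.cos (Real.pi / (m' : ℝ)) ^ 2 := by
      rw [show (-E.M x y) * (-E.M y x) = E.M x y * E.M y x by ring]
      exact hcval
    have hqp : (-E.M y x) * (-E.M x y) = 4 * Real.cos (Real.pi / (m' : ℝ)) ^ 2 := by
      rw [mul_comm]; exact hpq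
    have hsymm : E.m y x = m' := E.m_symm y x
    have hpos1 := EGCMAux.sSeq_pos_fin hm3 _ _ _ _ hp hq hpq hx hy
    have hT1 := EGCMAux.ext_track E hxy μ m' (fun k h1 h2 => hpos1 k h1 h2)
    have hpos2 := EGCMAux.sSeq_pos_fin hm3 _ _ _ _ hq hp hqp hy hx
    have hT2 := EGCMAux.ext_track E (Ne.symm hxy) μ m' (fun k h1 h2 => hpos2 k h1 h2)
    set l1 := s ++ EGCMAux.extWord x y m' with hl1def
    set l2 := s ++ EGCMAux.extWord y x m' with hl2def
    have hL1 : E.Legal lam l1 := (EGCMAux.legal_append E lam s _).mpr ⟨hlegal, hT1.1⟩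
    have hL2 : E.Legal lam l2 := (EGCMAux.legal_append E lam s _).mpr ⟨hlegal, hT2.1⟩
    obtain ⟨hred1, hmin1⟩ := EGCMAux.legal_reduced E cs J lam hJc l1 hL1
    obtain ⟨hred2, hmin2⟩ := EGCMAux.legal_reduced E cs J lam hJc l2 hL2
    have hrev1 : l1.reverse = alternatingWord y x m' ++ s.reverse := by
      rw [hl1def, List.reverse_append, EGCMAux.extWord, List.reverse_reverse]
    have hrev2 : l2.reverse = alternatingWord x y m' ++ s.reverse := by
      rw [hl2def, List.reverse_append, EGCMAux.extWord, List.reverse_reverse]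
    have haltEq : cs.wordProd (alternatingWord y x m') =
        cs.wordProd (alternatingWord x y m') := by
      have hcyx : E.cox y x = m' := hsymm
      have hle : m' ≤ E.cox y x * 2 := by rw [hcyx]; omega
      have h := cs.prod_alternatingWord_eq_prod_alternatingWord_sub y x m' hle
      have hidx : E.cox y x * 2 - m' = m' := by rw [hcyx]; omega
      rw [hidx] at h
      exact h
    have hueq : cs.wordProd l1.reverse = cs.wordProd l2.reverse := by
      rw [hrev1, hrev2, cs.wordProd_append, cs.wordProd_append, haltEq]
    have htrans : Relation.ReflTransGen (CommMove E) l1 l2 :=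
      hfc _ hmin1 l1 l2 hred1 rfl hred2 hueq.symm
    have hfilter := EGCMAux.reflTransGen_filter E hxy hMxy htrans
    have hf1 : l1.filter (fun t => decide (t = x ∨ t = y)) =
        s.filter (fun t => decide (t = x ∨ t = y)) ++ EGCMAux.extWord x y m' := by
      rw [hl1def, List.filter_append]
      congr 1
      apply List.filter_eq_self.mpr
      intro a ha
      exact decide_eq_true (EGCMAux.extWord_mem ha)
    have hf2 : l2.filter (fun t => decide (t = x ∨ t = y)) =
        s.filter (fun t => decide (t = x ∨ t = y)) ++ EGCMAux.extWord y x m' := by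
      rw [hl2def, List.filter_append]
      congr 1
      apply List.filter_eq_self.mpr
      intro a ha
      exact decide_eq_true (Or.symm (EGCMAux.extWord_mem ha))
    rw [hf1, hf2] at hfilter
    have hwords : EGCMAux.extWord x y m' = EGCMAux.extWord y x m' :=
      List.append_cancel_left hfilter
    rw [EGCMAux.extWord_head (by omega : 1 ≤ m'),
      EGCMAux.extWord_head (by omega : 1 ≤ m')] at hwords
    injection hwords with h1 _
    exact hxy h1
end

section
/- Suppose the E-GCM graph (Γ,M) has underlying graph a path γ_1 — γ_2 — ⋯ — γ_n (node i adjacent precisely to nodes i−1 and i+1) and M_{ij}M_{ji} = 1 for every edge (an E-Coxeter graph of type 𝒜_n). Then every fundamental position ω_i is adjacency-free. -/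
section TypeAAux

variable {n : ℕ}

/-- Diagonal rescaling factors along the path. -/
noncomputable def EGCM.dfn (E : EGCM (Fin n)) : ℕ → ℝ
  | 0 => 1
  | j + 1 =>
    if h : j + 1 < n then
      -(EGCM.dfn E j) / E.M ⟨j, Nat.lt_of_succ_lt h⟩ ⟨j + 1, h⟩
    else 1

lemma typeA_M_neg (E : EGCM (Fin n))
    (hadj : ∀ i j : Fin n, E.Adj i j ↔ (i.val + 1 = j.val ∨ j.val + 1 = i.val))
    {j : ℕ} (h : j + 1 < n) :
    E.M ⟨j, Nat.lt_of_succ_lt h⟩ ⟨j + 1, h⟩ < 0 := by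
  have hA : E.Adj ⟨j, Nat.lt_of_succ_lt h⟩ ⟨j + 1, h⟩ := by
    rw [hadj]; left; rfl
  obtain ⟨hne, hMne⟩ := hA
  exact lt_of_le_of_ne (E.offDiag_nonpos _ _ hne) hMne

lemma typeA_M_neg' (E : EGCM (Fin n))
    (hadj : ∀ i j : Fin n, E.Adj i j ↔ (i.val + 1 = j.val ∨ j.val + 1 = i.val))
    {j : ℕ} (h : j + 1 < n) :
    E.M ⟨j + 1, h⟩ ⟨j, Nat.lt_of_succ_lt h⟩ < 0 := by
  have hA : E.Adj ⟨j + 1, h⟩ ⟨j, Nat.lt_of_succ_lt h⟩ := by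
    rw [hadj]; right; rfl
  obtain ⟨hne, hMne⟩ := hA
  exact lt_of_le_of_ne (E.offDiag_nonpos _ _ hne) hMne

lemma typeA_dfn_pos (E : EGCM (Fin n))
    (hadj : ∀ i j : Fin n, E.Adj i j ↔ (i.val + 1 = j.val ∨ j.val + 1 = i.val)) :
    ∀ j, 0 < E.dfn j := by
  intro j
  induction j with
  | zero => norm_num [EGCM.dfn]
  | succ j ih =>
    rw [EGCM.dfn]
    split
    · rename_i h
      exact div_pos_of_neg_of_neg (by linarith) (typeA_M_neg E hadj h)
    · norm_num

/-- Recurrence 1: `dfn (j+1) * M j (j+1) = - dfn j`. -/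
lemma typeA_rec1 (E : EGCM (Fin n))
    (hadj : ∀ i j : Fin n, E.Adj i j ↔ (i.val + 1 = j.val ∨ j.val + 1 = i.val))
    {j : ℕ} (h : j + 1 < n) :
    E.dfn (j + 1) * E.M ⟨j, Nat.lt_of_succ_lt h⟩ ⟨j + 1, h⟩ = -E.dfn j := by
  have hM := typeA_M_neg E hadj h
  rw [EGCM.dfn, dif_pos h, div_mul_cancel₀ _ (ne_of_lt hM)]

/-- Recurrence 2: `dfn j * M (j+1) j = - dfn (j+1)`. -/
lemma typeA_rec2 (E : EGCM (Fin n))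
    (hadj : ∀ i j : Fin n, E.Adj i j ↔ (i.val + 1 = j.val ∨ j.val + 1 = i.val))
    (hprod : ∀ i j : Fin n, E.Adj i j → E.M i j * E.M j i = 1)
    {j : ℕ} (h : j + 1 < n) :
    E.dfn j * E.M ⟨j + 1, h⟩ ⟨j, Nat.lt_of_succ_lt h⟩ = -E.dfn (j + 1) := by
  have hM := typeA_M_neg E hadj h
  have hp : E.M ⟨j, Nat.lt_of_succ_lt h⟩ ⟨j + 1, h⟩ *
      E.M ⟨j + 1, h⟩ ⟨j, Nat.lt_of_succ_lt h⟩ = 1 := by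
    apply hprod
    rw [hadj]; left; rfl
  have hM' : E.M ⟨j + 1, h⟩ ⟨j, Nat.lt_of_succ_lt h⟩
      = 1 / E.M ⟨j, Nat.lt_of_succ_lt h⟩ ⟨j + 1, h⟩ :=
    eq_one_div_of_mul_eq_one_left (by rw [mul_comm]; exact hp)
  rw [EGCM.dfn, dif_pos h, hM', mul_one_div, neg_div, neg_neg]

/-- Nonadjacent distinct nodes have zero amplitude. -/
lemma typeA_M_zero (E : EGCM (Fin n))
    (hadj : ∀ i j : Fin n, E.Adj i j ↔ (i.val + 1 = j.val ∨ j.val + 1 = i.val))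
    {i j : Fin n} (hne : i ≠ j) (h1 : i.val + 1 ≠ j.val) (h2 : j.val + 1 ≠ i.val) :
    E.M i j = 0 := by
  by_contra hM
  have : E.Adj i j := ⟨hne, hM⟩
  rw [hadj] at this
  omega

/-- The invariant preserved by all firings. -/
def typeAInv (E : EGCM (Fin n)) (lam : Fin n → ℝ) : Prop :=
  ∃ c : ℝ, 0 < c ∧ ∃ x : ℕ → ℝ, (∀ k, x k = 0 ∨ x k = c) ∧
    ∀ j : Fin n, E.dfn j.val * lam j = x j.val - x (j.val + 1)

lemma typeAInv_single (E : EGCM (Fin n))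
    (hadj : ∀ i j : Fin n, E.Adj i j ↔ (i.val + 1 = j.val ∨ j.val + 1 = i.val))
    (i : Fin n) : typeAInv E (Pi.single i 1) := by
  refine ⟨E.dfn i.val, typeA_dfn_pos E hadj _,
    fun k => if k ≤ i.val then E.dfn i.val else 0, fun k => ?_, fun j => ?_⟩
  · beta_reduce
    split <;> simp
  · beta_reduce
    rcases eq_or_ne j i with rfl | hne
    · simp only [Pi.single_eq_same, mul_one]
      rw [if_pos (le_refl _), if_neg (by omega)]
      ring
    · rw [Pi.single_eq_of_ne hne, mul_zero]
      have hv : j.val ≠ i.val := fun h => hne (Fin.ext h)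
      rcases lt_or_gt_of_ne hv with hlt | hgt
      · rw [if_pos (by omega), if_pos (by omega)]; ring
      · rw [if_neg (by omega), if_neg (by omega)]; ring

lemma typeAInv_fire (E : EGCM (Fin n))
    (hadj : ∀ i j : Fin n, E.Adj i j ↔ (i.val + 1 = j.val ∨ j.val + 1 = i.val))
    (hprod : ∀ i j : Fin n, E.Adj i j → E.M i j * E.M j i = 1)
    (lam : Fin n → ℝ) (t : Fin n) (h : typeAInv E lam) :
    typeAInv E (E.fire lam t) := by
  obtain ⟨c, hc, x, hx, hlam⟩ := h
  refine ⟨c, hc, fun k => if k = t.val then x (t.val + 1)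
    else if k = t.val + 1 then x t.val else x k, fun k => ?_, fun j => ?_⟩
  · beta_reduce
    split
    · exact hx _
    · split
      · exact hx _
      · exact hx _
  · beta_reduce
    have hft : E.fire lam t j = lam j - E.M t j * lam t := rfl
    rcases eq_or_ne j t with rfl | hne
    · -- j = t
      have ea : (if (j.val : ℕ) = j.val then x (j.val + 1)
          else if (j.val : ℕ) = j.val + 1 then x j.val else x j.val) = x (j.val + 1) := by
        rw [if_pos rfl]
      have eb : (if (j.val + 1 : ℕ) = j.val then x (j.val + 1)
          else if (j.val + 1 : ℕ) = j.val + 1 then x j.val else x (j.val + 1)) = x j.val := by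
        rw [if_neg (by omega), if_pos rfl]
      rw [hft, E.diag, ea, eb]
      have := hlam j
      nlinarith [this]
    · have hv : j.val ≠ t.val := fun h => hne (Fin.ext h)
      by_cases h1 : j.val + 1 = t.val
      · -- j immediately left of t
        have hjlt : j.val + 1 < n := h1 ▸ t.isLt
        have hrec : E.dfn j.val * E.M t j = -E.dfn t.val := by
          have h5 := typeA_rec2 E hadj hprod hjlt
          have hteq : (⟨j.val + 1, hjlt⟩ : Fin n) = t := Fin.ext h1
          have hjeq : (⟨j.val, Nat.lt_of_succ_lt hjlt⟩ : Fin n) = j := Fin.ext rfl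
          rw [hteq, hjeq] at h5
          rw [← h1]
          exact h5
        have ea : (if (j.val : ℕ) = t.val then x (t.val + 1)
            else if (j.val : ℕ) = t.val + 1 then x t.val else x j.val) = x j.val := by
          rw [if_neg hv, if_neg (by omega)]
        have eb : (if (j.val + 1 : ℕ) = t.val then x (t.val + 1)
            else if (j.val + 1 : ℕ) = t.val + 1 then x t.val else x (j.val + 1))
            = x (t.val + 1) := by
          rw [if_pos h1]
        rw [hft, ea, eb]
        have ha := hlam j
        have hb := hlam t
        have hkey : E.dfn j.val * (lam j - E.M t j * lam t)
            = E.dfn j.val * lam j + E.dfn t.val * lam t := by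
          have : E.dfn j.val * E.M t j * lam t = -E.dfn t.val * lam t := by
            rw [hrec]
          nlinarith [this]
        rw [hkey, ha, hb, ← h1]
        ring
      · by_cases h2 : t.val + 1 = j.val
        · -- j immediately right of t
          have htlt : t.val + 1 < n := h2 ▸ j.isLt
          have hrec : E.dfn j.val * E.M t j = -E.dfn t.val := by
            have h5 := typeA_rec1 E hadj htlt
            have hteq : (⟨t.val, Nat.lt_of_succ_lt htlt⟩ : Fin n) = t := Fin.ext rfl
            have hjeq : (⟨t.val + 1, htlt⟩ : Fin n) = j := Fin.ext h2
            rw [hteq, hjeq] at h5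
            rw [← h2]
            exact h5
          have ea : (if (j.val : ℕ) = t.val then x (t.val + 1)
              else if (j.val : ℕ) = t.val + 1 then x t.val else x j.val) = x t.val := by
            rw [if_neg hv, if_pos h2.symm]
          have eb : (if (j.val + 1 : ℕ) = t.val then x (t.val + 1)
              else if (j.val + 1 : ℕ) = t.val + 1 then x t.val else x (j.val + 1))
              = x (j.val + 1) := by
            rw [if_neg (by omega), if_neg (by omega)]
          rw [hft, ea, eb]
          have ha := hlam j
          have hb := hlam t
          have hkey : E.dfn j.val * (lam j - E.M t j * lam t)
              = E.dfn j.val * lam j + E.dfn t.val * lam t := by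
            have : E.dfn j.val * E.M t j * lam t = -E.dfn t.val * lam t := by rw [hrec]
            nlinarith [this]
          rw [hkey, ha, hb, ← h2]
          ring
        · -- nonadjacent
          have hM0 : E.M t j = 0 :=
            typeA_M_zero E hadj (Ne.symm hne) h2 h1
          have ea : (if (j.val : ℕ) = t.val then x (t.val + 1)
              else if (j.val : ℕ) = t.val + 1 then x t.val else x j.val) = x j.val := by
            rw [if_neg hv, if_neg (by omega)]
          have eb : (if (j.val + 1 : ℕ) = t.val then x (t.val + 1)
              else if (j.val + 1 : ℕ) = t.val + 1 then x t.val else x (j.val + 1))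
              = x (j.val + 1) := by
            rw [if_neg (by omega), if_neg (by omega)]
          rw [hft, hM0, ea, eb]
          have := hlam j
          rw [zero_mul, sub_zero, this]

lemma typeAInv_fireList (E : EGCM (Fin n))
    (hadj : ∀ i j : Fin n, E.Adj i j ↔ (i.val + 1 = j.val ∨ j.val + 1 = i.val))
    (hprod : ∀ i j : Fin n, E.Adj i j → E.M i j * E.M j i = 1)
    (s : List (Fin n)) : ∀ lam : Fin n → ℝ, typeAInv E lam →
      typeAInv E (E.fireList lam s) := by
  induction s with
  | nil => intro lam h; exact h
  | cons a s ih =>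
    intro lam h
    exact ih _ (typeAInv_fire E hadj hprod lam a h)

lemma typeAInv_no_adj (E : EGCM (Fin n))
    (hadj : ∀ i j : Fin n, E.Adj i j ↔ (i.val + 1 = j.val ∨ j.val + 1 = i.val))
    (lam : Fin n → ℝ) (h : typeAInv E lam) :
    ¬ ∃ i j, E.Adj i j ∧ 0 < lam i ∧ 0 < lam j := by
  rintro ⟨i, j, hA, hi, hj⟩
  obtain ⟨c, hc, x, hx, hlam⟩ := h
  -- WLOG i.val + 1 = j.val
  have key : ∀ a b : Fin n, a.val + 1 = b.val → 0 < lam a → 0 < lam b → False := by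
    intro a b hab ha hb
    have hda : 0 < E.dfn a.val * lam a :=
      mul_pos (typeA_dfn_pos E hadj _) ha
    have hdb : 0 < E.dfn b.val * lam b :=
      mul_pos (typeA_dfn_pos E hadj _) hb
    rw [hlam a] at hda
    rw [hlam b, ← hab] at hdb
    rcases hx (a.val + 1) with h1 | h1 <;>
      rcases hx (a.val + 1 + 1) with h2 | h2 <;>
      rcases hx a.val with h3 | h3 <;>
      linarith
  rw [hadj] at hA
  rcases hA with h | h
  · exact key i j h hi hj
  · exact key j i h hj hi

end TypeAAux

/-- **Theorem 4.3 (type 𝒜ₙ).** On an E-Coxeter graph of type `𝒜_n` (a path with all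
amplitude products equal to 1), every fundamental position is adjacency-free. -/
theorem egcm_typeA_fundamental_adjacencyFree (n : ℕ) (E : EGCM (Fin n))
    (hadj : ∀ i j : Fin n, E.Adj i j ↔ (i.val + 1 = j.val ∨ j.val + 1 = i.val))
    (hprod : ∀ i j : Fin n, E.Adj i j → E.M i j * E.M j i = 1) :
    ∀ i : Fin n, E.AdjacencyFree (Pi.single i 1) := by
  intro i s _hs
  exact typeAInv_no_adj E hadj _
    (typeAInv_fireList E hadj hprod s _ (typeAInv_single E hadj i))
end

section
/- Let (Γ,M) be a four-node E-GCM graph whose underlying graph is a 4-cycle on nodes γ_1, γ_2, γ_3, γ_4 (in cyclic order), with M_{12}M_{21} = 4cos²(π/5) = (3+√5)/2 and M_{23}M_{32} = M_{34}M_{43} = M_{41}M_{14} = 1. Then (Γ,M) is not admissible. -/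
/-- **Lemma 6.5.** A four-node E-GCM graph which is a 4-cycle with one amplitude product
`4 cos² (π/5) = (3 + √5)/2` and the other three equal to `1` is not admissible. -/
theorem egcm_square_with_pentagon_edge_not_admissible (E : EGCM (Fin 4))
    (hadj : ∀ i j : Fin 4,
      E.Adj i j ↔ (j.val = (i.val + 1) % 4 ∨ i.val = (j.val + 1) % 4))
    (h12 : E.M 0 1 * E.M 1 0 = 4 * Real.cos (Real.pi / 5) ^ 2)
    (h23 : E.M 1 2 * E.M 2 1 = 1)
    (h34 : E.M 2 3 * E.M 3 2 = 1)
    (h41 : E.M 3 0 * E.M 0 3 = 1) :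
    ¬ E.Admissible := by
  rintro ⟨lam, hdom, hne, s, hleg, hterm⟩
  have hz : ∀ i j : Fin 4, i ≠ j →
      ¬((j : ℕ) = ((i : ℕ) + 1) % 4 ∨ (i : ℕ) = ((j : ℕ) + 1) % 4) → E.M i j = 0 := by
    intro i j hij hc
    by_contra h
    exact hc ((hadj i j).mp ⟨hij, h⟩)
  have h02 : E.M 0 2 = 0 := hz 0 2 (by decide) (by decide)
  have h13z : E.M 1 3 = 0 := hz 1 3 (by decide) (by decide)
  have h20 : E.M 2 0 = 0 := hz 2 0 (by decide) (by decide)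
  have h31z : E.M 3 1 = 0 := hz 3 1 (by decide) (by decide)
  have hneg : ∀ i j : Fin 4, i ≠ j →
      ((j : ℕ) = ((i : ℕ) + 1) % 4 ∨ (i : ℕ) = ((j : ℕ) + 1) % 4) → E.M i j < 0 :=
    fun i j hij hc => lt_of_le_of_ne (E.offDiag_nonpos i j hij) ((hadj i j).mpr hc).2
  have m01 := hneg 0 1 (by decide) (by decide)
  have m10 := hneg 1 0 (by decide) (by decide)
  have m12 := hneg 1 2 (by decide) (by decide)
  have m21 := hneg 2 1 (by decide) (by decide)
  have m23 := hneg 2 3 (by decide) (by decide)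
  have m32 := hneg 3 2 (by decide) (by decide)
  have m30 := hneg 3 0 (by decide) (by decide)
  have m03 := hneg 0 3 (by decide) (by decide)
  rw [Real.cos_pi_div_five] at h12
  set s5 := Real.sqrt 5 with hs5def
  have hs5 : s5 ^ 2 = 5 := Real.sq_sqrt (by norm_num)
  have hs5gt : 2 < s5 := by nlinarith [Real.sqrt_nonneg 5]
  have hs5lt : s5 < 3 := by nlinarith [Real.sqrt_nonneg 5]
  set phi : ℝ := (1 + s5) / 2 with hphi
  have hphipos : 0 < phi := by rw [hphi]; linarith
  have h2phi : 0 < 2 - phi := by rw [hphi]; linarith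
  have hprod : E.M 0 1 * E.M 1 0 = phi ^ 2 := by rw [h12, hphi]; ring
  set c0 : ℝ := E.M 0 1 * E.M 1 2 with hc0def
  set c1 : ℝ := -(phi * E.M 1 2) with hc1def
  set c2 : ℝ := phi * (2 - phi) with hc2def
  set c3 : ℝ := -((2 - phi) * (E.M 3 0 * E.M 0 1 * E.M 1 2)) with hc3def
  have hc0 : 0 < c0 := mul_pos_of_neg_of_neg m01 m12
  have hc1 : 0 < c1 := neg_pos.2 (mul_neg_of_pos_of_neg hphipos m12)
  have hRneg : E.M 3 0 * E.M 0 1 * E.M 1 2 < 0 :=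
    mul_neg_of_pos_of_neg (mul_pos_of_neg_of_neg m30 m01) m12
  have hc2 : 0 < c2 := mul_pos hphipos h2phi
  have hc3 : 0 < c3 := neg_pos.2 (mul_neg_of_pos_of_neg h2phi hRneg)
  have hQ : 0 < E.M 3 0 * E.M 0 1 * E.M 1 2 * E.M 2 3 := mul_pos_of_neg_of_neg hRneg m23
  -- the four row inequalities
  have r0 : 2 * c0 + c1 * E.M 0 1 + c3 * E.M 0 3 = 0 := by
    rw [hc0def, hc1def, hc3def]
    linear_combination (-((2 - phi) * (E.M 0 1 * E.M 1 2))) * h41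
  have r1 : 2 * c1 + c0 * E.M 1 0 + c2 * E.M 1 2 = 0 := by
    rw [hc0def, hc1def, hc2def]
    linear_combination E.M 1 2 * hprod
  have r2 : 2 * c2 + c1 * E.M 2 1 + c3 * E.M 2 3 ≤ 0 := by
    have e2 : 2 * c2 + c1 * E.M 2 1 + c3 * E.M 2 3 =
        phi * (3 - 2 * phi) - (2 - phi) * (E.M 3 0 * E.M 0 1 * E.M 1 2 * E.M 2 3) := by
      rw [hc1def, hc2def, hc3def]
      linear_combination (-phi) * h23
    have h32 : 3 - 2 * phi < 0 := by rw [hphi]; linarith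
    rw [e2]
    linarith [mul_pos h2phi hQ, mul_neg_of_pos_of_neg hphipos h32]
  have r3 : 2 * c3 + c0 * E.M 3 0 + c2 * E.M 3 2 ≤ 0 := by
    have e3 : 2 * c3 + c0 * E.M 3 0 + c2 * E.M 3 2 =
        (2 * phi - 3) * (E.M 3 0 * E.M 0 1 * E.M 1 2) + phi * (2 - phi) * E.M 3 2 := by
      rw [hc0def, hc2def, hc3def]; ring
    have h23' : 0 < 2 * phi - 3 := by rw [hphi]; linarith
    rw [e3]
    linarith [mul_neg_of_pos_of_neg h23' hRneg, mul_neg_of_pos_of_neg (mul_pos hphipos h2phi) m32]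
  -- the functional is nondecreasing under a legal firing
  have step : ∀ (i : Fin 4) (l : Fin 4 → ℝ), 0 < l i →
      c0 * l 0 + c1 * l 1 + c2 * l 2 + c3 * l 3 ≤
        c0 * E.fire l i 0 + c1 * E.fire l i 1 + c2 * E.fire l i 2 + c3 * E.fire l i 3 := by
    have s0 : ∀ l : Fin 4 → ℝ, 0 < l 0 →
        c0 * l 0 + c1 * l 1 + c2 * l 2 + c3 * l 3 ≤
          c0 * E.fire l 0 0 + c1 * E.fire l 0 1 + c2 * E.fire l 0 2 + c3 * E.fire l 0 3 := by
      intro l hl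
      simp only [EGCM.fire, E.diag, h02]
      linarith [mul_nonneg hl.le
        (by linarith : (0:ℝ) ≤ -(2 * c0 + c1 * E.M 0 1 + c3 * E.M 0 3))]
    have s1 : ∀ l : Fin 4 → ℝ, 0 < l 1 →
        c0 * l 0 + c1 * l 1 + c2 * l 2 + c3 * l 3 ≤
          c0 * E.fire l 1 0 + c1 * E.fire l 1 1 + c2 * E.fire l 1 2 + c3 * E.fire l 1 3 := by
      intro l hl
      simp only [EGCM.fire, E.diag, h13z]
      linarith [mul_nonneg hl.le
        (by linarith : (0:ℝ) ≤ -(2 * c1 + c0 * E.M 1 0 + c2 * E.M 1 2))]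
    have s2 : ∀ l : Fin 4 → ℝ, 0 < l 2 →
        c0 * l 0 + c1 * l 1 + c2 * l 2 + c3 * l 3 ≤
          c0 * E.fire l 2 0 + c1 * E.fire l 2 1 + c2 * E.fire l 2 2 + c3 * E.fire l 2 3 := by
      intro l hl
      simp only [EGCM.fire, E.diag, h20]
      linarith [mul_nonneg hl.le
        (by linarith : (0:ℝ) ≤ -(2 * c2 + c1 * E.M 2 1 + c3 * E.M 2 3))]
    have s3 : ∀ l : Fin 4 → ℝ, 0 < l 3 →
        c0 * l 0 + c1 * l 1 + c2 * l 2 + c3 * l 3 ≤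
          c0 * E.fire l 3 0 + c1 * E.fire l 3 1 + c2 * E.fire l 3 2 + c3 * E.fire l 3 3 := by
      intro l hl
      simp only [EGCM.fire, E.diag, h31z]
      linarith [mul_nonneg hl.le
        (by linarith : (0:ℝ) ≤ -(2 * c3 + c0 * E.M 3 0 + c2 * E.M 3 2))]
    intro i
    fin_cases i
    · exact s0
    · exact s1
    · exact s2
    · exact s3
  have mono : ∀ (t : List (Fin 4)) (l : Fin 4 → ℝ), E.Legal l t →
      c0 * l 0 + c1 * l 1 + c2 * l 2 + c3 * l 3 ≤
        c0 * E.fireList l t 0 + c1 * E.fireList l t 1 + c2 * E.fireList l t 2 +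
          c3 * E.fireList l t 3 := by
    intro t
    induction t with
    | nil => intro l _; simp [EGCM.fireList]
    | cons i t ih =>
      intro l hl
      obtain ⟨h1, h2⟩ := hl
      refine le_trans (step i l h1) ?_
      simpa [EGCM.fireList] using ih (E.fire l i) h2
  obtain ⟨k, hk⟩ := Function.ne_iff.mp hne
  have hk' : 0 < lam k := lt_of_le_of_ne (hdom k) (Ne.symm (by simpa using hk))
  have hstart : 0 < c0 * lam 0 + c1 * lam 1 + c2 * lam 2 + c3 * lam 3 := by
    have hk4 : k = 0 ∨ k = 1 ∨ k = 2 ∨ k = 3 := by fin_cases k <;> decide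
    rcases hk4 with rfl | rfl | rfl | rfl <;>
      linarith [mul_pos hc0 hk', mul_pos hc1 hk', mul_pos hc2 hk', mul_pos hc3 hk',
        mul_nonneg hc0.le (hdom 0), mul_nonneg hc1.le (hdom 1),
        mul_nonneg hc2.le (hdom 2), mul_nonneg hc3.le (hdom 3)]
  have hend : c0 * E.fireList lam s 0 + c1 * E.fireList lam s 1 + c2 * E.fireList lam s 2 +
      c3 * E.fireList lam s 3 ≤ 0 := by
    linarith [mul_nonneg hc0.le (neg_nonneg.2 (hterm 0)),
      mul_nonneg hc1.le (neg_nonneg.2 (hterm 1)),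
      mul_nonneg hc2.le (neg_nonneg.2 (hterm 2)),
      mul_nonneg hc3.le (neg_nonneg.2 (hterm 3))]
  linarith [mono s lam hleg]
end

section
/- Let (Γ,M) be a three-node E-GCM graph whose underlying graph is a triangle (all three pairs of nodes adjacent) and in which every pair of adjacent nodes is odd-neighborly (each m_ij is an odd integer ≥ 3). Then (Γ,M) is not admissible. -/
private lemma amgm_aux {x y c : ℝ} (hx : 0 < x) (hy : 0 < y) (hc : 0 < c)
    (h : c ^ 2 ≤ x * y) : 2 * c ≤ x + y := by
  nlinarith [sq_nonneg (x - y), sq_nonneg (x + y)]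

private lemma node_ineq (u v w : ℝ) (hu : 0 < u) (hv : 0 < v) (hw : 0 < w)
    (hQ : 1 ≤ u * (v * w)) :
    (u ^ (3⁻¹ : ℝ)) ^ 2 ≤ u * (v ^ (3⁻¹ : ℝ) * w ^ (3⁻¹ : ℝ)) := by
  have h13 : (0:ℝ) ≤ 3⁻¹ := by norm_num
  have hvw : v ^ (3⁻¹:ℝ) * w ^ (3⁻¹:ℝ) = (v * w) ^ (3⁻¹:ℝ) :=
    (Real.mul_rpow hv.le hw.le).symm
  have key : 1 ≤ u ^ (3⁻¹:ℝ) * (v * w) ^ (3⁻¹:ℝ) := by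
    rw [← Real.mul_rpow hu.le (mul_nonneg hv.le hw.le)]
    calc (1:ℝ) = 1 ^ (3⁻¹:ℝ) := (Real.one_rpow _).symm
      _ ≤ (u * (v * w)) ^ (3⁻¹:ℝ) := Real.rpow_le_rpow zero_le_one hQ h13
  have hu23 : (u ^ (3⁻¹:ℝ)) ^ 2 = u ^ (2/3:ℝ) := by
    rw [← Real.rpow_natCast (u ^ (3⁻¹:ℝ)) 2, ← Real.rpow_mul hu.le]
    norm_num
  have hsplit : u = u ^ (2/3:ℝ) * u ^ (3⁻¹:ℝ) := by
    rw [← Real.rpow_add hu]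
    norm_num
  calc (u ^ (3⁻¹:ℝ)) ^ 2 = u ^ (2/3:ℝ) * 1 := by rw [hu23, mul_one]
    _ ≤ u ^ (2/3:ℝ) * (u ^ (3⁻¹:ℝ) * (v * w) ^ (3⁻¹:ℝ)) :=
        mul_le_mul_of_nonneg_left key (Real.rpow_nonneg hu.le _)
    _ = u * (v ^ (3⁻¹:ℝ) * w ^ (3⁻¹:ℝ)) := by rw [hvw, ← mul_assoc, ← hsplit]

private lemma exists_c {a12 a21 a13 a31 a23 a32 : ℝ}
    (h12 : 0 < a12) (h21 : 0 < a21) (h13 : 0 < a13) (h31 : 0 < a31)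
    (h23 : 0 < a23) (h32 : 0 < a32)
    (p12 : 1 ≤ a12 * a21) (p13 : 1 ≤ a13 * a31) (p23 : 1 ≤ a23 * a32) :
    ∃ c1 c2 c3 : ℝ, 0 < c1 ∧ 0 < c2 ∧ 0 < c3 ∧
      2 * c1 ≤ a12 * c2 + a13 * c3 ∧
      2 * c2 ≤ a21 * c1 + a23 * c3 ∧
      2 * c3 ≤ a31 * c1 + a32 * c2 := by
  set u := a12 * a13 with hu_def
  set v := a21 * a23 with hv_def
  set w := a31 * a32 with hw_def
  have hu : 0 < u := mul_pos h12 h13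
  have hv : 0 < v := mul_pos h21 h23
  have hw : 0 < w := mul_pos h31 h32
  have hQ : 1 ≤ u * (v * w) := by
    have q1 : (1:ℝ) * 1 ≤ (a12 * a21) * (a13 * a31) :=
      mul_le_mul p12 p13 zero_le_one (by positivity)
    have q2 : (1:ℝ) * 1 ≤ ((a12 * a21) * (a13 * a31)) * (a23 * a32) :=
      mul_le_mul (by linarith) p23 zero_le_one (by positivity)
    rw [hu_def, hv_def, hw_def]
    nlinarith [q2]
  have hQ2 : 1 ≤ v * (u * w) := by nlinarith [hQ]
  have hQ3 : 1 ≤ w * (u * v) := by nlinarith [hQ]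
  refine ⟨u ^ (3⁻¹:ℝ), v ^ (3⁻¹:ℝ), w ^ (3⁻¹:ℝ),
    Real.rpow_pos_of_pos hu _, Real.rpow_pos_of_pos hv _, Real.rpow_pos_of_pos hw _,
    ?_, ?_, ?_⟩
  · apply amgm_aux (mul_pos h12 (Real.rpow_pos_of_pos hv _))
      (mul_pos h13 (Real.rpow_pos_of_pos hw _)) (Real.rpow_pos_of_pos hu _)
    calc (u ^ (3⁻¹:ℝ)) ^ 2 ≤ u * (v ^ (3⁻¹:ℝ) * w ^ (3⁻¹:ℝ)) :=
          node_ineq u v w hu hv hw hQ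
      _ = (a12 * v ^ (3⁻¹:ℝ)) * (a13 * w ^ (3⁻¹:ℝ)) := by rw [hu_def]; ring
  · apply amgm_aux (mul_pos h21 (Real.rpow_pos_of_pos hu _))
      (mul_pos h23 (Real.rpow_pos_of_pos hw _)) (Real.rpow_pos_of_pos hv _)
    calc (v ^ (3⁻¹:ℝ)) ^ 2 ≤ v * (u ^ (3⁻¹:ℝ) * w ^ (3⁻¹:ℝ)) :=
          node_ineq v u w hv hu hw hQ2
      _ = (a21 * u ^ (3⁻¹:ℝ)) * (a23 * w ^ (3⁻¹:ℝ)) := by rw [hv_def]; ring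
  · apply amgm_aux (mul_pos h31 (Real.rpow_pos_of_pos hu _))
      (mul_pos h32 (Real.rpow_pos_of_pos hv _)) (Real.rpow_pos_of_pos hw _)
    calc (w ^ (3⁻¹:ℝ)) ^ 2 ≤ w * (u ^ (3⁻¹:ℝ) * v ^ (3⁻¹:ℝ)) :=
          node_ineq w u v hw hu hv hQ3
      _ = (a31 * u ^ (3⁻¹:ℝ)) * (a32 * v ^ (3⁻¹:ℝ)) := by rw [hw_def]; ring

/-- **Lemma 6.6.** A three-node E-GCM graph which is a triangle all of whose node pairs
are odd-neighborly is not admissible. -/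
theorem egcm_odd_triangle_not_admissible (E : EGCM (Fin 3))
    (hodd : ∀ i j : Fin 3, i ≠ j →
      ∃ k : ℕ, Odd k ∧ 3 ≤ k ∧ E.M i j * E.M j i = 4 * Real.cos (Real.pi / k) ^ 2) :
    ¬ E.Admissible := by
  classical
  have hM1 : ∀ i j : Fin 3, i ≠ j → 1 ≤ E.M i j * E.M j i := by
    intro i j hij
    obtain ⟨k, -, hk3, hk⟩ := hodd i j hij
    have hk3' : (3:ℝ) ≤ (k:ℝ) := by exact_mod_cast hk3
    have hπ := Real.pi_pos
    have h1 : Real.pi / (k:ℝ) ≤ Real.pi / 3 := by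
      apply div_le_div_of_nonneg_left hπ.le (by norm_num) hk3'
    have h2 : Real.cos (Real.pi / 3) ≤ Real.cos (Real.pi / (k:ℝ)) :=
      Real.cos_le_cos_of_nonneg_of_le_pi (by positivity) (by linarith) h1
    rw [Real.cos_pi_div_three] at h2
    rw [hk]
    nlinarith [h2]
  have hMneg : ∀ i j : Fin 3, i ≠ j → E.M i j < 0 := by
    intro i j h
    rcases (E.offDiag_nonpos i j h).lt_or_eq with h' | h'
    · exact h'
    · exfalso
      have := hM1 i j h
      rw [h', zero_mul] at this
      linarith
  obtain ⟨c1, c2, c3, hc1, hc2, hc3, n1, n2, n3⟩ :=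
    exists_c (neg_pos.mpr (hMneg 0 1 (by decide))) (neg_pos.mpr (hMneg 1 0 (by decide)))
      (neg_pos.mpr (hMneg 0 2 (by decide))) (neg_pos.mpr (hMneg 2 0 (by decide)))
      (neg_pos.mpr (hMneg 1 2 (by decide))) (neg_pos.mpr (hMneg 2 1 (by decide)))
      (by rw [neg_mul_neg]; exact hM1 0 1 (by decide))
      (by rw [neg_mul_neg]; exact hM1 0 2 (by decide))
      (by rw [neg_mul_neg]; exact hM1 1 2 (by decide))
  set F : (Fin 3 → ℝ) → ℝ := fun lam => c1 * lam 0 + c2 * lam 1 + c3 * lam 2 with hF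
  have hstep : ∀ (lam : Fin 3 → ℝ) (i : Fin 3), 0 < lam i → F lam ≤ F (E.fire lam i) := by
    have htri : ∀ i : Fin 3, i = 0 ∨ i = 1 ∨ i = 2 := by decide
    intro lam i hpos
    rcases htri i with rfl | rfl | rfl <;> simp only [hF, EGCM.fire, E.diag]
    · nlinarith [mul_le_mul_of_nonneg_left n1 hpos.le]
    · nlinarith [mul_le_mul_of_nonneg_left n2 hpos.le]
    · nlinarith [mul_le_mul_of_nonneg_left n3 hpos.le]
  have hmono : ∀ (s : List (Fin 3)) (lam : Fin 3 → ℝ),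
      E.Legal lam s → F lam ≤ F (E.fireList lam s) := by
    intro s
    induction s with
    | nil => intro lam _; exact le_refl _
    | cons i t ih =>
      intro lam hleg
      exact le_trans (hstep lam i hleg.1) (ih _ hleg.2)
  rintro ⟨lam, hdom, hne, s, hleg, hterm⟩
  have hinit : 0 < F lam := by
    have hex : ∃ i, 0 < lam i := by
      by_contra h
      push_neg at h
      exact hne (funext fun i => le_antisymm (h i) (hdom i))
    obtain ⟨i, hi⟩ := hex
    simp only [hF]
    have htri : i = 0 ∨ i = 1 ∨ i = 2 := by omega
    rcases htri with rfl | rfl | rfl <;>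
      nlinarith [mul_nonneg hc1.le (hdom 0), mul_nonneg hc2.le (hdom 1),
        mul_nonneg hc3.le (hdom 2), mul_pos hc1 hi, mul_pos hc2 hi, mul_pos hc3 hi]
  have hfin : F (E.fireList lam s) ≤ 0 := by
    simp only [hF]
    nlinarith [mul_nonneg hc1.le (neg_nonneg.mpr (hterm 0)),
      mul_nonneg hc2.le (neg_nonneg.mpr (hterm 1)),
      mul_nonneg hc3.le (neg_nonneg.mpr (hterm 2))]
  linarith [hmono s lam hleg]
end
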